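/- arXiv:2208.00577 — 5 statements merged into one kernel-verified Lean document; each statement's English description precedes it below -/
import Mathlib

section
/- Let m ≥ 1, ℓ ≥ 1, suppose y ∈ D_{ℓ,m} is rightable at r, and let x = right(y). Then: (1) x ∈ D_{ℓ,m} and x ∉ T_{ℓ,m}; (2) x is leftable at r and left(x) = y; (3) degr(x) = degr(y); (4) area(x) = area(y) + 1. -/
open Finset

/-- Partial sum of the first `i` entries of a sequence. -/
def pSum (x : ℕ → ℤ) (i : ℕ) : ℤ := ∑ k ∈ Finset.range i, x k

/-- An `(ℓ,m)`-Dyck path in step coordinates, encoded as a sequence `ℕ → ℤ` of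
nonnegative integers vanishing beyond index `ℓ`. -/
def IsDyck (ℓ m : ℕ) (x : ℕ → ℤ) : Prop :=
  (∀ i, 0 ≤ x i) ∧
  (∀ i < ℓ, pSum x (i + 1) ≤ (m : ℤ) * (i + 1)) ∧
  pSum x (ℓ + 1) = (m : ℤ) * (ℓ + 1) ∧
  (∀ i, ℓ < i → x i = 0)

/-- `δ⁺_{ij}(x) = min(x_i, max(0, (x_i−m)+⋯+(x_j−m)−1))`. -/
def deltaP (m : ℕ) (x : ℕ → ℤ) (i j : ℕ) : ℤ :=
  min (x i) (max 0 ((∑ k ∈ Finset.Icc i j, (x k - (m : ℤ))) - 1))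

/-- `δ⁻_{ij}(x) = min(x_{i−1}, max(0, (m−x_i)+⋯+(m−x_j)))`. -/
def deltaM (m : ℕ) (x : ℕ → ℤ) (i j : ℕ) : ℤ :=
  min (x (i - 1)) (max 0 (∑ k ∈ Finset.Icc i j, ((m : ℤ) - x k)))

/-- `degr⁺(x) = Σ_{1 ≤ i ≤ j ≤ ℓ−1} δ⁺_{ij}(x)`. -/
def degrP (ℓ m : ℕ) (x : ℕ → ℤ) : ℤ :=
  ∑ i ∈ Finset.Icc 1 (ℓ - 1), ∑ j ∈ Finset.Icc i (ℓ - 1), deltaP m x i j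

/-- `degr⁻(x) = Σ_{1 ≤ i ≤ j ≤ ℓ−1} δ⁻_{ij}(x)`. -/
def degrM (ℓ m : ℕ) (x : ℕ → ℤ) : ℤ :=
  ∑ i ∈ Finset.Icc 1 (ℓ - 1), ∑ j ∈ Finset.Icc i (ℓ - 1), deltaM m x i j

/-- `degr(x) = degr⁺(x) + degr⁻(x)`. -/
def degr (ℓ m : ℕ) (x : ℕ → ℤ) : ℤ := degrP ℓ m x + degrM ℓ m x

/-- Position coordinates `a_i = (m−x_0)+⋯+(m−x_{i−1})`, with the convention
`a_s = 0` for `s > ℓ`. -/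
def dyckPos (ℓ m : ℕ) (x : ℕ → ℤ) (i : ℕ) : ℤ :=
  if i ≤ ℓ then (m : ℤ) * i - pSum x i else 0

/-- `area(x) = a_1 + ⋯ + a_ℓ = M − (ℓ·x_0 + ⋯ + 1·x_{ℓ−1})`. -/
def area (ℓ m : ℕ) (x : ℕ → ℤ) : ℤ := ∑ i ∈ Finset.Icc 1 ℓ, dyckPos ℓ m x i

/-- `point(x)`: the minimal `r ≤ ℓ` such that `a_r − a_ℓ > −m`. -/
noncomputable def dyckPoint (ℓ m : ℕ) (x : ℕ → ℤ) : ℕ :=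
  sInf {r : ℕ | -(m : ℤ) < dyckPos ℓ m x r - dyckPos ℓ m x ℓ}

/-- `pair(x)`: the minimal `r < ℓ` such that `a_r − a_{r+2} ≥ −m`. -/
noncomputable def dyckPair (ℓ m : ℕ) (x : ℕ → ℤ) : ℕ :=
  sInf {r : ℕ | r < ℓ ∧ -(m : ℤ) ≤ dyckPos ℓ m x r - dyckPos ℓ m x (r + 2)}

/-- `x` is rightable at `r`. -/
def RightableAt (ℓ m : ℕ) (x : ℕ → ℤ) (r : ℕ) : Prop :=
  dyckPoint ℓ m x = r ∧ r < ℓ ∧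
    ∀ i, i + 2 ≤ r → dyckPos ℓ m x i - dyckPos ℓ m x (i + 2) < -(m : ℤ)

/-- `x` is leftable at `r`. -/
def LeftableAt (ℓ m : ℕ) (x : ℕ → ℤ) (r : ℕ) : Prop :=
  dyckPair ℓ m x = r ∧ dyckPos ℓ m x (r + 1) - dyckPos ℓ m x ℓ ≤ (m : ℤ) + 1

/-- Reconstruct step coordinates from position coordinates:
`x_i = m + a_i − a_{i+1}` (with `a_{ℓ+1} = 0`), vanishing beyond `ℓ`. -/
def fromPos (ℓ m : ℕ) (a : ℕ → ℤ) : ℕ → ℤ :=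
  fun i => if i ≤ ℓ then (m : ℤ) + a i - a (i + 1) else 0

/-- Position coordinates of `cycleright(r,x)`:
`[a_0,…,a_r, a_ℓ+1, a_{r+1},…,a_{ℓ−1}]`. -/
def rightPosSeq (ℓ m : ℕ) (x : ℕ → ℤ) (r : ℕ) : ℕ → ℤ := fun i =>
  if i ≤ r then dyckPos ℓ m x i
  else if i = r + 1 then dyckPos ℓ m x ℓ + 1
  else if i ≤ ℓ then dyckPos ℓ m x (i - 1)
  else 0

/-- `right(x)` when `x` is rightable at `r`. -/
def rightMap (ℓ m : ℕ) (x : ℕ → ℤ) (r : ℕ) : ℕ → ℤ := fromPos ℓ m (rightPosSeq ℓ m x r)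

/-- Position coordinates of `cycleleft(r,x)`:
`[a_0,…,a_r, a_{r+2},…,a_ℓ, a_{r+1}−1]`. -/
def leftPosSeq (ℓ m : ℕ) (x : ℕ → ℤ) (r : ℕ) : ℕ → ℤ := fun i =>
  if i ≤ r then dyckPos ℓ m x i
  else if i < ℓ then dyckPos ℓ m x (i + 1)
  else if i = ℓ then dyckPos ℓ m x (r + 1) - 1
  else 0

/-- `left(x)` when `x` is leftable at `r`. -/
def leftMap (ℓ m : ℕ) (x : ℕ → ℤ) (r : ℕ) : ℕ → ℤ := fromPos ℓ m (leftPosSeq ℓ m x r)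

def Rightable (ℓ m : ℕ) (x : ℕ → ℤ) : Prop := ∃ r, RightableAt ℓ m x r

def Leftable (ℓ m : ℕ) (x : ℕ → ℤ) : Prop := ∃ r, LeftableAt ℓ m x r

/-- One application of `right` (meaningful when `x` is rightable). -/
noncomputable def rightStep (ℓ m : ℕ) (x : ℕ → ℤ) : ℕ → ℤ := rightMap ℓ m x (dyckPoint ℓ m x)

/-- One application of `left` (meaningful when `x` is leftable). -/
noncomputable def leftStep (ℓ m : ℕ) (x : ℕ → ℤ) : ℕ → ℤ := leftMap ℓ m x (dyckPair ℓ m x)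

/-- `y = lowest(x)`: `y = rightⁱ(x)` with all intermediate steps rightable and
`y` itself not rightable. -/
def IsLowestOf (ℓ m : ℕ) (x y : ℕ → ℤ) : Prop :=
  (∃ k, (∀ j < k, Rightable ℓ m ((rightStep ℓ m)^[j] x)) ∧ y = (rightStep ℓ m)^[k] x) ∧
    ¬ Rightable ℓ m y

/-- `x` is disconnected: some `leftⁱ(x)` is a Dyck path that is not leftable. -/
def Disconnected (ℓ m : ℕ) (x : ℕ → ℤ) : Prop :=
  ∃ i, IsDyck ℓ m ((leftStep ℓ m)^[i] x) ∧ ¬ Leftable ℓ m ((leftStep ℓ m)^[i] x)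

def ConnectedPath (ℓ m : ℕ) (x : ℕ → ℤ) : Prop := ¬ Disconnected ℓ m x

/-- `string(v₀) = {rightⁱ(v₀) : 0 ≤ i ≤ b}` where `right^b(v₀) = lowest(v₀)`. -/
def stringSet (ℓ m : ℕ) (v0 : ℕ → ℤ) : Set (ℕ → ℤ) :=
  {y | ∃ i, (∀ j < i, Rightable ℓ m ((rightStep ℓ m)^[j] v0)) ∧ y = (rightStep ℓ m)^[i] v0}

/-- A matrix in `𝐌_{m×ℓ}`, encoded as `M : ℕ → ℕ → Option Bool`
(`some false` = 0, `some true` = 1, `none` = ∗; entries outside the `m×ℓ`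
range are normalized to `none`). -/
def IsGoodMatrix (m ℓ : ℕ) (M : ℕ → ℕ → Option Bool) : Prop :=
  (∀ i j, m ≤ i ∨ ℓ ≤ j → M i j = none) ∧
  (∀ i j i' j', i < m → j < ℓ → i' < m → j' < ℓ → M i j = none →
    (i < i' ∨ (i = i' ∧ j < j')) → M i' j' = none) ∧
  M 0 0 = some false ∧
  (∀ i j, i < m → j < ℓ → M i j ≠ none →
    (M i j = some true ∨
      ∃ i' j', i' < m ∧ j' < ℓ ∧ (i < i' ∨ (i = i' ∧ j < j')) ∧ M i' j' ≠ none)) ∧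
  (∀ i j, M i j = some false → M (i + 1) j ≠ some true)

/-- `|M|`: the number of `(0,1)` pairs of entries of `M` in contact. -/
def contactCount (m ℓ : ℕ) (M : ℕ → ℕ → Option Bool) : ℕ :=
  (((Finset.range m ×ˢ Finset.range ℓ) ×ˢ (Finset.range m ×ˢ Finset.range ℓ)).filter
    fun p => M p.1.1 p.1.2 = some false ∧ M p.2.1 p.2.2 = some true ∧
      ((p.2.1 = p.1.1 ∧ p.1.2 < p.2.2) ∨ (p.2.1 = p.1.1 + 1 ∧ p.2.2 ≤ p.1.2))).card

/-- `h(M)`: the number of `0` entries of `M`. -/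
def zeroCount (m ℓ : ℕ) (M : ℕ → ℕ → Option Bool) : ℕ :=
  ((Finset.range m ×ˢ Finset.range ℓ).filter fun p => M p.1 p.2 = some false).card

/-- `w(M)`: the number of `1` entries of `M`. -/
def oneCount (m ℓ : ℕ) (M : ℕ → ℕ → Option Bool) : ℕ :=
  ((Finset.range m ×ˢ Finset.range ℓ).filter fun p => M p.1 p.2 = some true).card

/-- A partition with all parts ≤ `b`, as a weakly decreasing list of positive
integers. -/
def IsPartitionList (b : ℕ) (L : List ℕ) : Prop :=
  L.Pairwise (· ≥ ·) ∧ ∀ p ∈ L, 0 < p ∧ p ≤ b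

/-- The `(ℓ−1)`-width `w^{ℓ−1}(λ)`: the sum of the lengths of the
`(ℓ−1)`-hook rows of `λ` (row 1 is a hook row; if row `i` is a hook row, so is
row `i + ℓ − λ_i`). -/
def hookWidth (ℓ : ℕ) : List ℕ → ℕ
  | [] => 0
  | p :: rest => p + hookWidth ℓ (rest.drop (ℓ - p - 1))
  termination_by L => L.length
  decreasing_by
    simp only [List.length_drop, List.length_cons]
    omega

/-- The number of `1` entries in column `j` of `M`. -/
def colOnes (m : ℕ) (M : ℕ → ℕ → Option Bool) (j : ℕ) : ℕ :=
  ((Finset.range m).filter fun i => M i j = some true).card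

/-- The map `f`: the path with position coordinates `[0,a_1,…,a_ℓ]` where `a_j`
is the number of `1` entries in column `j` of `M`. -/
def pathOfMatrix (ℓ m : ℕ) (M : ℕ → ℕ → Option Bool) : ℕ → ℤ :=
  fromPos ℓ m fun i => if i = 0 then 0 else if i ≤ ℓ then (colOnes m M (i - 1) : ℤ) else 0

/-- The number of `1` entries in contact with the `0` entry at `(i,j)`. -/
def zContacts (m ℓ : ℕ) (M : ℕ → ℕ → Option Bool) (i j : ℕ) : ℕ :=
  ((Finset.range m ×ˢ Finset.range ℓ).filter
    fun q => M q.1 q.2 = some true ∧ ((q.1 = i ∧ j < q.2) ∨ (q.1 = i + 1 ∧ q.2 ≤ j))).card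

/-- The number of `0` entries strictly before `(i,j)` in row-reading order. -/
def zIndex (m ℓ : ℕ) (M : ℕ → ℕ → Option Bool) (i j : ℕ) : ℕ :=
  ((Finset.range m ×ˢ Finset.range ℓ).filter
    fun q => M q.1 q.2 = some false ∧ (q.1 < i ∨ (q.1 = i ∧ q.2 < j))).card

/-- `M` realizes the partition `L`: the `i`-th `0` entry of `M` in row-reading
order is in contact with exactly `L_i` entries equal to `1`. -/
def MatRealizes (m ℓ : ℕ) (M : ℕ → ℕ → Option Bool) (L : List ℕ) : Prop :=
  zeroCount m ℓ M = L.length ∧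
  ∀ i j, i < m → j < ℓ → M i j = some false →
    zContacts m ℓ M i j = L.getD (zIndex m ℓ M i j) 0

/-- `x = f(g(L))` for the bijections `f`, `g` (characterized relationally). -/
def IsFG (ℓ m : ℕ) (L : List ℕ) (x : ℕ → ℤ) : Prop :=
  ∃ M, IsGoodMatrix m ℓ M ∧ contactCount m ℓ M < (ℓ - 1) * m ∧ MatRealizes m ℓ M L ∧
    x = pathOfMatrix ℓ m M

/-- The partition with `p i` parts of size `ℓ−1−i`, for `0 ≤ i ≤ ℓ−2`. -/
def partitionOfCounts (ℓ : ℕ) (p : ℕ → ℕ) : List ℕ :=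
  (List.range (ℓ - 1)).flatMap fun i => List.replicate (p i) (ℓ - 1 - i)

/-- `M = m·ℓ(ℓ+1)/2`, the maximal possible area. -/
def MVal (ℓ m : ℕ) : ℕ := m * ℓ * (ℓ + 1) / 2

/-- The predicate `extendable(ℓ,m,d)`. -/
def Extendable (ℓ m : ℕ) (d : ℤ) : Prop :=
  ∃ ext : List ℕ → Set (ℕ → ℤ),
    (∀ L, IsPartitionList (ℓ - 1) L → (L.sum : ℤ) = d →
      (ext L ⊆ {w | IsDyck ℓ m w ∧ degr ℓ m w = d ∧ Disconnected ℓ m w}) ∧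
      (∀ w w', w ∈ ext L → w' ∈ ext L → area ℓ m w = area ℓ m w' → w = w') ∧
      (∀ v0, IsFG ℓ m L v0 → ∀ vs, IsLowestOf ℓ m v0 vs →
        area ℓ m vs ≤ (MVal ℓ m : ℤ) - L.sum - L.length ∧
        ∀ a : ℤ, (area ℓ m vs < a ∧ a ≤ (MVal ℓ m : ℤ) - L.sum - L.length) ↔
          ∃ w ∈ ext L, area ℓ m w = a)) ∧
    ({w | IsDyck ℓ m w ∧ degr ℓ m w = d ∧ Disconnected ℓ m w} =
      ⋃ L ∈ {L : List ℕ | IsPartitionList (ℓ - 1) L ∧ (L.sum : ℤ) = d}, ext L) ∧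
    (∀ L L', IsPartitionList (ℓ - 1) L → (L.sum : ℤ) = d →
      IsPartitionList (ℓ - 1) L' → (L'.sum : ℤ) = d → L ≠ L' → ext L ∩ ext L' = ∅)


-- ===== auxiliary development =====

lemma pSum_succ (x : ℕ → ℤ) (i : ℕ) : pSum x (i+1) = pSum x i + x i :=
  Finset.sum_range_succ x i

lemma dyckPos_zero (ℓ m : ℕ) (x : ℕ → ℤ) : dyckPos ℓ m x 0 = 0 := by
  simp [dyckPos, pSum]

lemma step_eq (ℓ m : ℕ) (w : ℕ → ℤ) (i : ℕ) (hi : i < ℓ) :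
    w i = (m : ℤ) + dyckPos ℓ m w i - dyckPos ℓ m w (i+1) := by
  rw [dyckPos, dyckPos, if_pos hi.le, if_pos (by omega : i + 1 ≤ ℓ), pSum_succ]
  push_cast; ring

lemma pSum_fromPos (ℓ m : ℕ) (b : ℕ → ℤ) :
    ∀ i, i ≤ ℓ + 1 → pSum (fromPos ℓ m b) i = (m : ℤ) * i + b 0 - b i := by
  intro i
  induction i with
  | zero => intro _; simp [pSum]
  | succ n ih =>
    intro hn
    rw [pSum_succ, ih (by omega), fromPos, if_pos (by omega : n ≤ ℓ)]
    push_cast; ring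

lemma dyckPos_fromPos (ℓ m : ℕ) (b : ℕ → ℤ) (hb0 : b 0 = 0) (i : ℕ) (hi : i ≤ ℓ) :
    dyckPos ℓ m (fromPos ℓ m b) i = b i := by
  rw [dyckPos, if_pos hi, pSum_fromPos ℓ m b i (by omega), hb0]; ring

lemma isDyck_fromPos (ℓ m : ℕ) (b : ℕ → ℤ) (hb0 : b 0 = 0) (hbl : b (ℓ+1) = 0)
    (hnn : ∀ i, 1 ≤ i → i ≤ ℓ → 0 ≤ b i) (hst : ∀ i, i ≤ ℓ → b (i+1) ≤ b i + m) :
    IsDyck ℓ m (fromPos ℓ m b) := by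
  refine ⟨?_, ?_, ?_, ?_⟩
  · intro i
    rcases le_or_gt i ℓ with h | h
    · simp only [fromPos]
      rw [if_pos h]
      have := hst i h
      linarith
    · simp only [fromPos]
      rw [if_neg (by omega)]
  · intro i hi
    rw [pSum_fromPos ℓ m b (i+1) (by omega), hb0]
    have := hnn (i+1) (by omega) (by omega)
    push_cast
    linarith
  · rw [pSum_fromPos ℓ m b (ℓ+1) (le_refl _), hb0, hbl]
    push_cast
    ring
  · intro i hi
    simp only [fromPos]
    rw [if_neg (by omega)]

lemma sum_steps (ℓ m : ℕ) (w : ℕ → ℤ) (i j : ℕ) (hi : 1 ≤ i) (hij : i ≤ j) (hj : j < ℓ) :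
    ∑ k ∈ Finset.Icc i j, (w k - (m:ℤ)) = dyckPos ℓ m w i - dyckPos ℓ m w (j+1) := by
  have hc : ∑ k ∈ Finset.Icc i j, w k = pSum w (j+1) - pSum w i := by
    rw [← Finset.Ico_add_one_right_eq_Icc, Finset.sum_Ico_eq_sub w (by omega : i ≤ j + 1)]; rfl
  rw [Finset.sum_sub_distrib, hc, Finset.sum_const, Nat.card_Icc,
    dyckPos, dyckPos, if_pos (by omega : i ≤ ℓ), if_pos (by omega : j + 1 ≤ ℓ)]
  have : ((j + 1 - i : ℕ) : ℤ) = (j : ℤ) + 1 - i := by omega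
  rw [nsmul_eq_mul, this]
  push_cast; ring

lemma sum_steps' (ℓ m : ℕ) (w : ℕ → ℤ) (i j : ℕ) (hi : 1 ≤ i) (hij : i ≤ j) (hj : j < ℓ) :
    ∑ k ∈ Finset.Icc i j, ((m:ℤ) - w k) = dyckPos ℓ m w (j+1) - dyckPos ℓ m w i := by
  have h1 := sum_steps ℓ m w i j hi hij hj
  have h2 : ∑ k ∈ Finset.Icc i j, ((m:ℤ) - w k) = - ∑ k ∈ Finset.Icc i j, (w k - (m:ℤ)) := by
    rw [← Finset.sum_neg_distrib]
    exact Finset.sum_congr rfl fun k _ => by ring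
  rw [h2, h1]; ring

lemma sum_shift_down (f : ℕ → ℤ) (a b : ℕ) (ha : 1 ≤ a) :
    ∑ t ∈ Finset.Ioc a b, f (t-1) = ∑ t ∈ Finset.Ioc (a-1) (b-1), f t := by
  refine Finset.sum_bij' (fun t _ => t - 1) (fun t _ => t + 1) (fun t ht => ?_)
    (fun t ht => ?_) (fun t ht => ?_) (fun t ht => ?_) (fun t ht => rfl)
  · simp only [Finset.mem_Ioc] at ht ⊢; omega
  · simp only [Finset.mem_Ioc] at ht ⊢; omega
  · simp only [Finset.mem_Ioc] at ht; show t - 1 + 1 = t; omega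
  · simp only [Finset.mem_Ioc] at ht; show t + 1 - 1 = t; omega

lemma sum_shift_up (f : ℕ → ℤ) (a b : ℕ) :
    ∑ j ∈ Finset.Icc a b, f (j+1) = ∑ t ∈ Finset.Ioc a (b+1), f t := by
  refine Finset.sum_bij' (fun t _ => t + 1) (fun t _ => t - 1) (fun t ht => ?_)
    (fun t ht => ?_) (fun t ht => ?_) (fun t ht => ?_) (fun t ht => ?_)
  · simp only [Finset.mem_Icc, Finset.mem_Ioc] at ht ⊢; omega
  · simp only [Finset.mem_Icc, Finset.mem_Ioc] at ht ⊢; omega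
  · simp only [Finset.mem_Icc] at ht; show t + 1 - 1 = t; omega
  · simp only [Finset.mem_Ioc] at ht; show t - 1 + 1 = t; omega
  · rfl

lemma tele (h : ℕ → ℤ) (a : ℕ) : ∀ n : ℕ,
    ∑ k ∈ Finset.Ioc a (a+n), (h k - h (k+1)) = h (a+1) - h (a+n+1) := by
  intro n
  induction n with
  | zero => simp
  | succ n ih =>
    rw [show a + (n+1) = (a+n) + 1 from rfl, Finset.sum_Ioc_succ_top (by omega), ih]; ring

def phiF (m c v w : ℤ) : ℤ :=
  min (m+v-w) (max 0 (v-c)) - max 0 (v-c) - min (m+v) (c-1)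
def extraF (m c p q v : ℤ) : ℤ :=
  min (m+c-q) (max 0 (c-v-1)) + min (m+p-c) (max 0 (v-c))
def d1F (m c p q v : ℤ) : ℤ :=
  min (m+p-c) (max 0 (p-v-1)) - min (m+p-q) (max 0 (p-v-1))
def d2F (m c p q v : ℤ) : ℤ :=
  min (m+c-q) (max 0 (v-q)) - min (m+p-q) (max 0 (v-q))
def glF (m c v' v w : ℤ) : ℤ :=
  min (m+v-w) (max 0 (v-c)) + min (m+v'-v) (max 0 (c-v-1))

set_option maxHeartbeats 3000000 in
lemma id_k (m p q c v' v w : ℤ) (hm : 1 ≤ m) (hp : 0 ≤ p) (hq : 0 ≤ q)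
    (hc1 : p + 1 ≤ c) (hc2 : c ≤ p + m) (hq2 : q ≤ p + m)
    (hv' : 0 ≤ v') (hv : 0 ≤ v) (hw : 0 ≤ w) (h1 : v ≤ v' + m) (h2 : w ≤ v + m) :
    extraF m c p q v + d1F m c p q v + d2F m c p q v - glF m c v' v w
      = phiF m c v' v - phiF m c v w := by
  unfold extraF d1F d2F glF phiF
  rcases lt_or_ge v c with hlt | hge
  · have e1 : max 0 (v - c) = 0 := by omega
    have e2 : min (m+p-c) (0:ℤ) = 0 := by omega
    have e3 : min (m+v-w) (0:ℤ) = 0 := by omega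
    rw [e1, e2, e3]
    omega
  · have e1 : max 0 (c-v-1) = 0 := by omega
    have e2 : max 0 (p-v-1) = 0 := by omega
    have e3 : min (m+c-q) (0:ℤ) = 0 := by omega
    have e4 : min (m+p-c) (0:ℤ) = 0 := by omega
    have e5 : min (m+p-q) (0:ℤ) = 0 := by omega
    have e6 : min (m+v'-v) (0:ℤ) = 0 := by omega
    rw [e1, e2, e3, e4, e5, e6]
    omega

lemma id_b (m p q c w' : ℤ) (hm : 1 ≤ m) (hp : 0 ≤ p) (hc1 : p+1 ≤ c) (hc2 : c ≤ p+m)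
    (hq2 : q ≤ p + m) (hw' : 0 ≤ w') (hb : c ≤ w' + m + 1) :
    phiF m c p q = phiF m c w' (c-1) := by
  unfold phiF
  omega

def gfun (m : ℤ) (W : ℕ → ℤ) (i t : ℕ) : ℤ :=
  min (m + W i - W (i+1)) (max 0 (W i - W t - 1))
    + min (m + W (i-1) - W i) (max 0 (W t - W i))

lemma degr_eq (ℓ m : ℕ) (w : ℕ → ℤ) :
    degr ℓ m w = ∑ i ∈ Finset.Ioc 0 (ℓ-1), ∑ t ∈ Finset.Ioc i ℓ,
      gfun (m:ℤ) (dyckPos ℓ m w) i t := by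
  rw [degr, degrP, degrM, ← Finset.sum_add_distrib]
  rw [show Finset.Icc 1 (ℓ-1) = Finset.Ioc 0 (ℓ-1) from Finset.Icc_add_one_left_eq_Ioc 0 (ℓ-1)]
  refine Finset.sum_congr rfl fun i hi => ?_
  simp only [Finset.mem_Ioc] at hi
  rw [← Finset.sum_add_distrib]
  have key : ∀ j ∈ Finset.Icc i (ℓ-1), deltaP m w i j + deltaM m w i j
      = gfun (m:ℤ) (dyckPos ℓ m w) i (j+1) := by
    intro j hj
    simp only [Finset.mem_Icc] at hj
    have hil : i < ℓ := by omega
    have hjl : j < ℓ := by omega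
    rw [deltaP, deltaM, gfun, sum_steps ℓ m w i j (by omega) hj.1 hjl,
      sum_steps' ℓ m w i j (by omega) hj.1 hjl,
      ← step_eq ℓ m w i hil]
    have hi1 : w (i-1) = (m:ℤ) + dyckPos ℓ m w (i-1) - dyckPos ℓ m w i := by
      have := step_eq ℓ m w (i-1) (by omega)
      rwa [show i - 1 + 1 = i by omega] at this
    rw [← hi1]
  rw [Finset.sum_congr rfl key, sum_shift_up (fun t => gfun (m:ℤ) (dyckPos ℓ m w) i t) i (ℓ-1),
    show ℓ - 1 + 1 = ℓ by omega]

lemma sum_Ioc_top (f : ℕ → ℤ) (a b : ℕ) (h : a < b) :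
    ∑ t ∈ Finset.Ioc a b, f t = (∑ t ∈ Finset.Ioc a (b-1), f t) + f b := by
  obtain ⟨b', rfl⟩ : ∃ b', b = b' + 1 := ⟨b-1, by omega⟩
  rw [Finset.sum_Ioc_succ_top (by omega), Nat.add_sub_cancel]

lemma sum_Ioc_bot (f : ℕ → ℤ) (a b : ℕ) (h : a < b) :
    ∑ t ∈ Finset.Ioc a b, f t = f (a+1) + ∑ t ∈ Finset.Ioc (a+1) b, f t := by
  rw [← Finset.sum_Ioc_consecutive f (show a ≤ a+1 by omega) (show a+1 ≤ b by omega),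
    Finset.sum_Ioc_succ_top (le_refl a), Finset.Ioc_self, Finset.sum_empty, zero_add]

lemma SS_eq (ℓ r : ℕ) (m : ℤ) (A B : ℕ → ℤ)
    (hm : 1 ≤ m) (hr : r < ℓ)
    (hA0 : A 0 = 0)
    (hAnn : ∀ i, i ≤ ℓ → 0 ≤ A i)
    (hstep : ∀ i, i < ℓ → A (i+1) ≤ A i + m)
    (hpt : A ℓ < A r + m)
    (hmin : ∀ j, j < r → A j + m ≤ A ℓ)
    (hArl : A r ≤ A ℓ)
    (hB1 : ∀ i, i ≤ r → B i = A i)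
    (hB2 : B (r+1) = A ℓ + 1)
    (hB3 : ∀ i, r+2 ≤ i → i ≤ ℓ → B i = A (i-1)) :
    ∑ i ∈ Finset.Ioc 0 (ℓ-1), ∑ t ∈ Finset.Ioc i ℓ, gfun m B i t
      = ∑ i ∈ Finset.Ioc 0 (ℓ-1), ∑ t ∈ Finset.Ioc i ℓ, gfun m A i t := by
  -- abbreviations
  have hq2 : A (r+1) ≤ A r + m := hstep r hr
  -- the four residual sums
  set c : ℤ := A ℓ + 1 with hc
  set T1 : ℤ := ∑ k ∈ Finset.Ioc r (ℓ-1), d1F m c (A r) (A (r+1)) (A k) with hT1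
  set T2 : ℤ := ∑ k ∈ Finset.Ioc r (ℓ-1), d2F m c (A r) (A (r+1)) (A k) with hT2
  set TX : ℤ := ∑ k ∈ Finset.Ioc r (ℓ-1), extraF m c (A r) (A (r+1)) (A k) with hTX
  set TG : ℤ := ∑ k ∈ Finset.Ioc r (ℓ-1), gfun m A k ℓ with hTG
  -- telescoping: T1 + T2 + TX - TG = 0
  have hTT : T1 + T2 + TX - TG = 0 := by
    have step1 : T1 + T2 + TX - TG = ∑ k ∈ Finset.Ioc r (ℓ-1),
        ((fun k => phiF m c (A (k-1)) (A k)) k - (fun k => phiF m c (A (k-1)) (A k)) (k+1)) := by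
      rw [hT1, hT2, hTX, hTG, ← Finset.sum_add_distrib, ← Finset.sum_add_distrib,
        ← Finset.sum_sub_distrib]
      refine Finset.sum_congr rfl fun k hk => ?_
      simp only [Finset.mem_Ioc] at hk
      have hgl : gfun m A k ℓ = glF m c (A (k-1)) (A k) (A (k+1)) := by
        rw [gfun, glF, show A k - A ℓ - 1 = A k - c by rw [hc]; ring,
          show A ℓ - A k = c - A k - 1 by rw [hc]; ring]
      rw [hgl]
      have e1 : phiF m c (A (k-1)) (A k) = (fun k => phiF m c (A (k-1)) (A k)) k := rfl
      have e2 : phiF m c (A k) (A (k+1)) = (fun k => phiF m c (A (k-1)) (A k)) (k+1) := by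
        simp only [Nat.add_sub_cancel]
      rw [← e1, ← e2]
      have hk1 : A k ≤ A (k-1) + m := by
        have := hstep (k-1) (by omega)
        rwa [show k - 1 + 1 = k by omega] at this
      have hid := id_k m (A r) (A (r+1)) c (A (k-1)) (A k) (A (k+1)) hm
        (hAnn r (by omega)) (hAnn (r+1) (by omega))
        (by rw [hc]; omega) (by rw [hc]; omega) hq2
        (hAnn (k-1) (by omega)) (hAnn k (by omega)) (hAnn (k+1) (by omega))
        hk1 (hstep k (by omega))
      linarith
    rw [step1, show ℓ - 1 = r + (ℓ - 1 - r) by omega,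
      tele (fun k => phiF m c (A (k-1)) (A k)) r (ℓ - 1 - r)]
    simp only [Nat.add_sub_cancel]
    rw [show r + (ℓ - 1 - r) + 1 = ℓ by omega, show r + (ℓ - 1 - r) = ℓ - 1 by omega]
    have hb := id_b m (A r) (A (r+1)) c (A (ℓ-1)) hm (hAnn r (by omega))
      (by rw [hc]; omega) (by rw [hc]; omega) hq2 (hAnn (ℓ-1) (by omega))
      (by rw [hc]
          have := hstep (ℓ-1) (by omega)
          rw [show ℓ - 1 + 1 = ℓ by omega] at this
          omega)
    rw [show c - 1 = A ℓ by rw [hc]; ring] at hb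
    rw [hb]; ring
  -- Claim C1 : lower block i < r
  have hC1 : ∀ i, 1 ≤ i → i < r →
      (∑ t ∈ Finset.Ioc i ℓ, gfun m B i t) = ∑ t ∈ Finset.Ioc i ℓ, gfun m A i t := by
    intro i h1 h2
    have sB : ∑ t ∈ Finset.Ioc i ℓ, gfun m B i t
        = (∑ t ∈ Finset.Ioc i r, gfun m B i t) + ∑ t ∈ Finset.Ioc r ℓ, gfun m B i t :=
      (Finset.sum_Ioc_consecutive _ (by omega) (by omega)).symm
    have sB2 : ∑ t ∈ Finset.Ioc r ℓ, gfun m B i t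
        = gfun m B i (r+1) + ∑ t ∈ Finset.Ioc (r+1) ℓ, gfun m B i t :=
      sum_Ioc_bot _ r ℓ hr
    have eq1 : ∑ t ∈ Finset.Ioc i r, gfun m B i t = ∑ t ∈ Finset.Ioc i r, gfun m A i t := by
      refine Finset.sum_congr rfl fun t ht => ?_
      simp only [Finset.mem_Ioc] at ht
      rw [gfun, gfun, hB1 i (by omega), hB1 (i+1) (by omega), hB1 (i-1) (by omega),
        hB1 t (by omega)]
    have eq2 : gfun m B i (r+1) = gfun m A i ℓ := by
      rw [gfun, gfun, hB1 i (by omega), hB1 (i+1) (by omega), hB1 (i-1) (by omega), hB2, hc]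
      have f1 : A i + m ≤ A ℓ := hmin i (by omega)
      have f2 : A (i-1) + m ≤ A ℓ := hmin (i-1) (by omega)
      have f3 : A (i+1) ≤ A i + m := hstep i (by omega)
      omega
    have eq3 : ∑ t ∈ Finset.Ioc (r+1) ℓ, gfun m B i t
        = ∑ t ∈ Finset.Ioc r (ℓ-1), gfun m A i t := by
      have h' : ∀ t ∈ Finset.Ioc (r+1) ℓ, gfun m B i t = (fun k => gfun m A i k) (t-1) := by
        intro t ht
        simp only [Finset.mem_Ioc] at ht
        show gfun m B i t = gfun m A i (t-1)
        rw [gfun, gfun, hB1 i (by omega), hB1 (i+1) (by omega), hB1 (i-1) (by omega),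
          hB3 t (by omega) (by omega)]
      rw [Finset.sum_congr rfl h', sum_shift_down (fun k => gfun m A i k) (r+1) ℓ (by omega)]
      simp only [Nat.add_sub_cancel]
    have sA : ∑ t ∈ Finset.Ioc i ℓ, gfun m A i t
        = (∑ t ∈ Finset.Ioc i r, gfun m A i t) + ∑ t ∈ Finset.Ioc r ℓ, gfun m A i t :=
      (Finset.sum_Ioc_consecutive _ (by omega) (by omega)).symm
    have sA2 : ∑ t ∈ Finset.Ioc r ℓ, gfun m A i t
        = (∑ t ∈ Finset.Ioc r (ℓ-1), gfun m A i t) + gfun m A i ℓ :=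
      sum_Ioc_top _ r ℓ hr
    linarith
  -- Claim C2 : i = r (needs 1 ≤ r)
  have hC2 : 1 ≤ r → (∑ t ∈ Finset.Ioc r ℓ, gfun m B r t)
      = (∑ t ∈ Finset.Ioc r ℓ, gfun m A r t) + T1 := by
    intro h1
    have sB2 : ∑ t ∈ Finset.Ioc r ℓ, gfun m B r t
        = gfun m B r (r+1) + ∑ t ∈ Finset.Ioc (r+1) ℓ, gfun m B r t :=
      sum_Ioc_bot _ r ℓ hr
    have eq2 : gfun m B r (r+1) = gfun m A r ℓ := by
      rw [gfun, gfun, hB1 r (by omega), hB1 (r-1) (by omega), hB2, hc]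
      have f2 : A (r-1) + m ≤ A ℓ := hmin (r-1) (by omega)
      have f3 : A (r+1) ≤ A r + m := hq2
      omega
    have eq3 : ∑ t ∈ Finset.Ioc (r+1) ℓ, gfun m B r t
        = ∑ k ∈ Finset.Ioc r (ℓ-1), (gfun m A r k + d1F m c (A r) (A (r+1)) (A k)) := by
      have h' : ∀ t ∈ Finset.Ioc (r+1) ℓ, gfun m B r t
          = (fun k => gfun m A r k + d1F m c (A r) (A (r+1)) (A k)) (t-1) := by
        intro t ht
        simp only [Finset.mem_Ioc] at ht
        show gfun m B r t = gfun m A r (t-1) + d1F m c (A r) (A (r+1)) (A (t-1))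
        rw [gfun, gfun, hB1 r (by omega), hB1 (r-1) (by omega), hB2,
          hB3 t (by omega) (by omega), d1F, hc]
        have f2 : 0 ≤ m + A (r-1) - A r := by
          have := hstep (r-1) (by omega)
          rw [show r - 1 + 1 = r by omega] at this
          omega
        omega
      rw [Finset.sum_congr rfl h',
        sum_shift_down (fun k => gfun m A r k + d1F m c (A r) (A (r+1)) (A k)) (r+1) ℓ (by omega)]
      simp only [Nat.add_sub_cancel]
    have sA2 : ∑ t ∈ Finset.Ioc r ℓ, gfun m A r t
        = (∑ t ∈ Finset.Ioc r (ℓ-1), gfun m A r t) + gfun m A r ℓ :=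
      sum_Ioc_top _ r ℓ hr
    have dist : ∑ k ∈ Finset.Ioc r (ℓ-1), (gfun m A r k + d1F m c (A r) (A (r+1)) (A k))
        = (∑ k ∈ Finset.Ioc r (ℓ-1), gfun m A r k) + T1 := by
      rw [hT1, Finset.sum_add_distrib]
    linarith
  -- Claim C3 : i = r+1
  have hC3 : r + 2 ≤ ℓ → (∑ t ∈ Finset.Ioc (r+1) ℓ, gfun m B (r+1) t) = TX := by
    intro h1
    have h' : ∀ t ∈ Finset.Ioc (r+1) ℓ, gfun m B (r+1) t
        = (fun k => extraF m c (A r) (A (r+1)) (A k)) (t-1) := by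
      intro t ht
      simp only [Finset.mem_Ioc] at ht
      show gfun m B (r+1) t = extraF m c (A r) (A (r+1)) (A (t-1))
      rw [gfun, show r + 1 + 1 = r + 2 by omega, show r + 1 - 1 = r by omega, hB2,
        hB1 r (by omega), hB3 (r+2) (by omega) (by omega), show r + 2 - 1 = r + 1 by omega,
        hB3 t (by omega) (by omega), extraF]
    rw [hTX, Finset.sum_congr rfl h',
      sum_shift_down (fun k => extraF m c (A r) (A (r+1)) (A k)) (r+1) ℓ (by omega)]
    simp only [Nat.add_sub_cancel]
  -- Claim C4 : i = r+2
  have hC4 : r + 2 ≤ ℓ - 1 → (∑ t ∈ Finset.Ioc (r+2) ℓ, gfun m B (r+2) t)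
      = ((∑ t ∈ Finset.Ioc (r+1) ℓ, gfun m A (r+1) t) - gfun m A (r+1) ℓ) + T2 := by
    intro h1
    have eq3 : ∑ t ∈ Finset.Ioc (r+2) ℓ, gfun m B (r+2) t
        = ∑ k ∈ Finset.Ioc (r+1) (ℓ-1), (gfun m A (r+1) k + d2F m c (A r) (A (r+1)) (A k)) := by
      have h' : ∀ t ∈ Finset.Ioc (r+2) ℓ, gfun m B (r+2) t
          = (fun k => gfun m A (r+1) k + d2F m c (A r) (A (r+1)) (A k)) (t-1) := by
        intro t ht
        simp only [Finset.mem_Ioc] at ht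
        show gfun m B (r+2) t = gfun m A (r+1) (t-1) + d2F m c (A r) (A (r+1)) (A (t-1))
        rw [gfun, gfun, show r + 2 + 1 = r + 3 by omega, show r + 2 - 1 = r + 1 by omega,
          show r + 1 + 1 = r + 2 by omega, show r + 1 - 1 = r by omega,
          hB3 (r+3) (by omega) (by omega), show r + 3 - 1 = r + 2 by omega,
          hB3 (r+2) (by omega) (by omega), show r + 2 - 1 = r + 1 by omega,
          hB2, hB3 t (by omega) (by omega), d2F, hc]
        have f2 : 0 ≤ m + A r - A (r+1) := by omega
        omega
      rw [Finset.sum_congr rfl h',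
        sum_shift_down (fun k => gfun m A (r+1) k + d2F m c (A r) (A (r+1)) (A k))
          (r+2) ℓ (by omega), show r + 2 - 1 = r + 1 by omega]
    have dist : ∑ k ∈ Finset.Ioc (r+1) (ℓ-1), (gfun m A (r+1) k + d2F m c (A r) (A (r+1)) (A k))
        = (∑ k ∈ Finset.Ioc (r+1) (ℓ-1), gfun m A (r+1) k)
          + ∑ k ∈ Finset.Ioc (r+1) (ℓ-1), d2F m c (A r) (A (r+1)) (A k) :=
      Finset.sum_add_distrib
    have sA2 : ∑ t ∈ Finset.Ioc (r+1) ℓ, gfun m A (r+1) t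
        = (∑ t ∈ Finset.Ioc (r+1) (ℓ-1), gfun m A (r+1) t) + gfun m A (r+1) ℓ :=
      sum_Ioc_top _ (r+1) ℓ (by omega)
    have t2split : T2 = d2F m c (A r) (A (r+1)) (A (r+1))
        + ∑ k ∈ Finset.Ioc (r+1) (ℓ-1), d2F m c (A r) (A (r+1)) (A k) := by
      rw [hT2]
      exact sum_Ioc_bot _ r (ℓ-1) (by omega)
    have dq : d2F m c (A r) (A (r+1)) (A (r+1)) = 0 := by
      rw [d2F, hc]
      omega
    linarith
  -- Claim C5 : i ≥ r+3
  have hC5 : ∀ i, r + 3 ≤ i → i ≤ ℓ - 1 → (∑ t ∈ Finset.Ioc i ℓ, gfun m B i t)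
      = (∑ t ∈ Finset.Ioc (i-1) ℓ, gfun m A (i-1) t) - gfun m A (i-1) ℓ := by
    intro i h1 h2
    have eq3 : ∑ t ∈ Finset.Ioc i ℓ, gfun m B i t
        = ∑ k ∈ Finset.Ioc (i-1) (ℓ-1), gfun m A (i-1) k := by
      have h' : ∀ t ∈ Finset.Ioc i ℓ, gfun m B i t = (fun k => gfun m A (i-1) k) (t-1) := by
        intro t ht
        simp only [Finset.mem_Ioc] at ht
        show gfun m B i t = gfun m A (i-1) (t-1)
        rw [gfun, gfun, hB3 i (by omega) (by omega), hB3 (i+1) (by omega) (by omega),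
          hB3 (i-1) (by omega) (by omega), hB3 t (by omega) (by omega),
          show i - 1 + 1 = i by omega, show i + 1 - 1 = i by omega]
      rw [Finset.sum_congr rfl h', sum_shift_down (fun k => gfun m A (i-1) k) i ℓ (by omega)]
    have sA2 : ∑ t ∈ Finset.Ioc (i-1) ℓ, gfun m A (i-1) t
        = (∑ t ∈ Finset.Ioc (i-1) (ℓ-1), gfun m A (i-1) t) + gfun m A (i-1) ℓ :=
      sum_Ioc_top _ (i-1) ℓ (by omega)
    linarith
  -- uniform lower block
  have hU : (∑ i ∈ Finset.Ioc 0 r, ∑ t ∈ Finset.Ioc i ℓ, gfun m B i t)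
      = (∑ i ∈ Finset.Ioc 0 r, ∑ t ∈ Finset.Ioc i ℓ, gfun m A i t) + T1 := by
    rcases Nat.eq_zero_or_pos r with hr0 | hr1
    · subst hr0
      simp only [Finset.Ioc_self, Finset.sum_empty, zero_add]
      rw [hT1]
      symm
      refine Finset.sum_eq_zero fun k hk => ?_
      simp only [Finset.mem_Ioc] at hk
      rw [d1F, hA0, hc]
      have f1 : 0 ≤ A k := hAnn k (by omega)
      have f2 : A 1 ≤ A 0 + m := hstep 0 (by omega)
      rw [hA0] at f2
      rw [show (0:ℕ) + 1 = 1 from rfl]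
      omega
    · have pB : ∑ i ∈ Finset.Ioc 0 r, ∑ t ∈ Finset.Ioc i ℓ, gfun m B i t
          = (∑ i ∈ Finset.Ioc 0 (r-1), ∑ t ∈ Finset.Ioc i ℓ, gfun m B i t)
            + ∑ t ∈ Finset.Ioc r ℓ, gfun m B r t :=
        sum_Ioc_top (fun i => ∑ t ∈ Finset.Ioc i ℓ, gfun m B i t) 0 r (by omega)
      have pA : ∑ i ∈ Finset.Ioc 0 r, ∑ t ∈ Finset.Ioc i ℓ, gfun m A i t
          = (∑ i ∈ Finset.Ioc 0 (r-1), ∑ t ∈ Finset.Ioc i ℓ, gfun m A i t)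
            + ∑ t ∈ Finset.Ioc r ℓ, gfun m A r t :=
        sum_Ioc_top (fun i => ∑ t ∈ Finset.Ioc i ℓ, gfun m A i t) 0 r (by omega)
      have low : ∑ i ∈ Finset.Ioc 0 (r-1), ∑ t ∈ Finset.Ioc i ℓ, gfun m B i t
          = ∑ i ∈ Finset.Ioc 0 (r-1), ∑ t ∈ Finset.Ioc i ℓ, gfun m A i t := by
        refine Finset.sum_congr rfl fun i hi => ?_
        simp only [Finset.mem_Ioc] at hi
        exact hC1 i (by omega) (by omega)
      have := hC2 hr1
      linarith
  -- main case split
  rcases Nat.lt_or_ge (r+1) ℓ with hcase | hcase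
  · rcases Nat.lt_or_ge (r+2) ℓ with hcase2 | hcase2
    · -- general case : r + 2 < ℓ
      have sB : ∑ i ∈ Finset.Ioc 0 (ℓ-1), ∑ t ∈ Finset.Ioc i ℓ, gfun m B i t
          = (∑ i ∈ Finset.Ioc 0 r, ∑ t ∈ Finset.Ioc i ℓ, gfun m B i t)
            + ((∑ t ∈ Finset.Ioc (r+1) ℓ, gfun m B (r+1) t)
            + ((∑ t ∈ Finset.Ioc (r+2) ℓ, gfun m B (r+2) t)
            + ∑ i ∈ Finset.Ioc (r+2) (ℓ-1), ∑ t ∈ Finset.Ioc i ℓ, gfun m B i t)) := by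
        rw [← Finset.sum_Ioc_consecutive _ (show 0 ≤ r by omega) (show r ≤ ℓ-1 by omega),
          sum_Ioc_bot (fun i => ∑ t ∈ Finset.Ioc i ℓ, gfun m B i t) r (ℓ-1) (by omega),
          sum_Ioc_bot (fun i => ∑ t ∈ Finset.Ioc i ℓ, gfun m B i t) (r+1) (ℓ-1) (by omega),
          show r + 1 + 1 = r + 2 by omega]
      have sA : ∑ i ∈ Finset.Ioc 0 (ℓ-1), ∑ t ∈ Finset.Ioc i ℓ, gfun m A i t
          = (∑ i ∈ Finset.Ioc 0 r, ∑ t ∈ Finset.Ioc i ℓ, gfun m A i t)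
            + ((∑ t ∈ Finset.Ioc (r+1) ℓ, gfun m A (r+1) t)
            + ((∑ i ∈ Finset.Ioc (r+1) (ℓ-2), ∑ t ∈ Finset.Ioc i ℓ, gfun m A i t)
            + ∑ t ∈ Finset.Ioc (ℓ-1) ℓ, gfun m A (ℓ-1) t)) := by
        rw [← Finset.sum_Ioc_consecutive _ (show 0 ≤ r by omega) (show r ≤ ℓ-1 by omega),
          sum_Ioc_bot (fun i => ∑ t ∈ Finset.Ioc i ℓ, gfun m A i t) r (ℓ-1) (by omega),
          sum_Ioc_top (fun i => ∑ t ∈ Finset.Ioc i ℓ, gfun m A i t) (r+1) (ℓ-1) (by omega),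
          show ℓ - 1 - 1 = ℓ - 2 by omega]
      have sFAl : ∑ t ∈ Finset.Ioc (ℓ-1) ℓ, gfun m A (ℓ-1) t = gfun m A (ℓ-1) ℓ := by
        rw [sum_Ioc_top _ (ℓ-1) ℓ (by omega), Finset.Ioc_self, Finset.sum_empty, zero_add]
      have hc3 := hC3 (by omega)
      have hc4 := hC4 (by omega)
      have tailB : ∑ i ∈ Finset.Ioc (r+2) (ℓ-1), ∑ t ∈ Finset.Ioc i ℓ, gfun m B i t
          = ∑ i ∈ Finset.Ioc (r+1) (ℓ-2),
              ((∑ t ∈ Finset.Ioc i ℓ, gfun m A i t) - gfun m A i ℓ) := by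
        have h' : ∀ i ∈ Finset.Ioc (r+2) (ℓ-1), (∑ t ∈ Finset.Ioc i ℓ, gfun m B i t)
            = (fun k => (∑ t ∈ Finset.Ioc k ℓ, gfun m A k t) - gfun m A k ℓ) (i-1) := by
          intro i hi
          simp only [Finset.mem_Ioc] at hi
          exact hC5 i (by omega) (by omega)
        rw [Finset.sum_congr rfl h',
          sum_shift_down (fun k => (∑ t ∈ Finset.Ioc k ℓ, gfun m A k t) - gfun m A k ℓ)
            (r+2) (ℓ-1) (by omega),
          show r + 2 - 1 = r + 1 by omega, show ℓ - 1 - 1 = ℓ - 2 by omega]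
      have tailsub : ∑ i ∈ Finset.Ioc (r+1) (ℓ-2),
            ((∑ t ∈ Finset.Ioc i ℓ, gfun m A i t) - gfun m A i ℓ)
          = (∑ i ∈ Finset.Ioc (r+1) (ℓ-2), ∑ t ∈ Finset.Ioc i ℓ, gfun m A i t)
            - ∑ i ∈ Finset.Ioc (r+1) (ℓ-2), gfun m A i ℓ :=
        Finset.sum_sub_distrib _ _
      have hTGd : TG = gfun m A (r+1) ℓ
          + ((∑ k ∈ Finset.Ioc (r+1) (ℓ-2), gfun m A k ℓ) + gfun m A (ℓ-1) ℓ) := by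
        rw [hTG, sum_Ioc_bot (fun k => gfun m A k ℓ) r (ℓ-1) (by omega),
          sum_Ioc_top (fun k => gfun m A k ℓ) (r+1) (ℓ-1) (by omega),
          show ℓ - 1 - 1 = ℓ - 2 by omega]
      linarith
    · -- case r + 2 = ℓ
      have e : ℓ - 1 = r + 1 := by omega
      have sB : ∑ i ∈ Finset.Ioc 0 (ℓ-1), ∑ t ∈ Finset.Ioc i ℓ, gfun m B i t
          = (∑ i ∈ Finset.Ioc 0 r, ∑ t ∈ Finset.Ioc i ℓ, gfun m B i t)
            + ∑ t ∈ Finset.Ioc (r+1) ℓ, gfun m B (r+1) t := by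
        rw [e, sum_Ioc_top (fun i => ∑ t ∈ Finset.Ioc i ℓ, gfun m B i t) 0 (r+1) (by omega),
          show r + 1 - 1 = r by omega]
      have sA : ∑ i ∈ Finset.Ioc 0 (ℓ-1), ∑ t ∈ Finset.Ioc i ℓ, gfun m A i t
          = (∑ i ∈ Finset.Ioc 0 r, ∑ t ∈ Finset.Ioc i ℓ, gfun m A i t)
            + ∑ t ∈ Finset.Ioc (r+1) ℓ, gfun m A (r+1) t := by
        rw [e, sum_Ioc_top (fun i => ∑ t ∈ Finset.Ioc i ℓ, gfun m A i t) 0 (r+1) (by omega),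
          show r + 1 - 1 = r by omega]
      have hc3 := hC3 (by omega)
      have hTGd : TG = gfun m A (r+1) ℓ := by
        rw [hTG, e, sum_Ioc_bot (fun k => gfun m A k ℓ) r (r+1) (by omega),
          Finset.Ioc_self, Finset.sum_empty, add_zero]
      have hT2d : T2 = 0 := by
        rw [hT2, e, sum_Ioc_bot (fun k => d2F m c (A r) (A (r+1)) (A k)) r (r+1) (by omega),
          Finset.Ioc_self, Finset.sum_empty, add_zero, d2F, hc]
        omega
      have sFA : ∑ t ∈ Finset.Ioc (r+1) ℓ, gfun m A (r+1) t = gfun m A (r+1) ℓ := by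
        rw [sum_Ioc_top (fun t => gfun m A (r+1) t) (r+1) ℓ (by omega), e,
          Finset.Ioc_self, Finset.sum_empty, zero_add]
      linarith
  · -- case r + 1 = ℓ
    have e : ℓ - 1 = r := by omega
    have hT1d : T1 = 0 := by
      rw [hT1, e, Finset.Ioc_self, Finset.sum_empty]
    rw [e]
    linarith

/-- Claim `rightcheck`: if `y ∈ 𝐃_{ℓ,m}` is rightable at `r` and
`x = right(y)`, then (1) `x ∈ 𝐃_{ℓ,m} \ 𝐓_{ℓ,m}`, (2) `x` is leftable at `r`
and `left(x) = y`, (3) `degr(x) = degr(y)`, (4) `area(x) = area(y) + 1`. -/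
theorem statement5 (ℓ m : ℕ) (hm : 1 ≤ m) (hl : 1 ≤ ℓ) (y : ℕ → ℤ) (r : ℕ)
    (hy : IsDyck ℓ m y) (hr : RightableAt ℓ m y r) :
    IsDyck ℓ m (rightMap ℓ m y r) ∧ (rightMap ℓ m y r) 0 ≠ (m : ℤ) ∧
    LeftableAt ℓ m (rightMap ℓ m y r) r ∧ leftMap ℓ m (rightMap ℓ m y r) r = y ∧
    degr ℓ m (rightMap ℓ m y r) = degr ℓ m y ∧
    area ℓ m (rightMap ℓ m y r) = area ℓ m y + 1 := by
  obtain ⟨hpt_eq, hrl, hgap⟩ := hr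
  obtain ⟨hy1, hy2, hy3, hy4⟩ := hy
  have hm' : (1:ℤ) ≤ (m:ℤ) := by exact_mod_cast hm
  have hA0 : dyckPos ℓ m y 0 = 0 := dyckPos_zero ℓ m y
  have hAnn : ∀ i, i ≤ ℓ → 0 ≤ dyckPos ℓ m y i := by
    intro i hi
    rcases Nat.eq_zero_or_pos i with rfl | hpos
    · rw [hA0]
    · have h' := hy2 (i-1) (by omega)
      rw [show i - 1 + 1 = i by omega] at h'
      have hcast : ((i - 1 : ℕ) : ℤ) = (i : ℤ) - 1 := by omega
      rw [hcast] at h'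
      have he : (m:ℤ) * ((i:ℤ) - 1 + 1) = (m:ℤ) * i := by ring
      rw [he] at h'
      rw [dyckPos, if_pos hi]
      linarith
  have hstepA : ∀ i, i < ℓ → dyckPos ℓ m y (i+1) ≤ dyckPos ℓ m y i + (m:ℤ) := by
    intro i hi
    have h0 := hy1 i
    have he := step_eq ℓ m y i hi
    linarith
  have hyl : y ℓ = (m:ℤ) + dyckPos ℓ m y ℓ := by
    have h := pSum_succ y ℓ
    rw [hy3] at h
    rw [dyckPos, if_pos (le_refl ℓ)]
    push_cast at h ⊢
    linarith
  -- point facts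
  have hSinf : sInf {r' : ℕ | -(m:ℤ) < dyckPos ℓ m y r' - dyckPos ℓ m y ℓ} = r := hpt_eq
  have hSne : ℓ ∈ {r' : ℕ | -(m:ℤ) < dyckPos ℓ m y r' - dyckPos ℓ m y ℓ} := by
    simp only [Set.mem_setOf_eq, sub_self]
    linarith
  have hmem : -(m:ℤ) < dyckPos ℓ m y r - dyckPos ℓ m y ℓ := by
    have h := Nat.sInf_mem (⟨ℓ, hSne⟩ :
      {r' : ℕ | -(m:ℤ) < dyckPos ℓ m y r' - dyckPos ℓ m y ℓ}.Nonempty)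
    rwa [hSinf] at h
  have hminpt : ∀ j, j < r → dyckPos ℓ m y j + (m:ℤ) ≤ dyckPos ℓ m y ℓ := by
    intro j hj
    by_contra hcon
    push_neg at hcon
    have hjS : j ∈ {r' : ℕ | -(m:ℤ) < dyckPos ℓ m y r' - dyckPos ℓ m y ℓ} := by
      simp only [Set.mem_setOf_eq]
      linarith
    have h := Nat.sInf_le hjS
    rw [hSinf] at h
    omega
  have hArl : dyckPos ℓ m y r ≤ dyckPos ℓ m y ℓ := by
    rcases Nat.eq_zero_or_pos r with rfl | hrpos
    · rw [hA0]
      exact hAnn ℓ (le_refl ℓ)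
    · have h1 := hstepA (r-1) (by omega)
      rw [show r - 1 + 1 = r by omega] at h1
      have h2 := hminpt (r-1) (by omega)
      linarith
  -- B facts
  have hB1 : ∀ i, i ≤ r → rightPosSeq ℓ m y r i = dyckPos ℓ m y i := by
    intro i hi
    simp only [rightPosSeq]
    rw [if_pos hi]
  have hB2 : rightPosSeq ℓ m y r (r+1) = dyckPos ℓ m y ℓ + 1 := by
    have h : ¬ (r + 1 ≤ r) := by omega
    simp [rightPosSeq, h]
  have hB3 : ∀ i, r+2 ≤ i → i ≤ ℓ → rightPosSeq ℓ m y r i = dyckPos ℓ m y (i-1) := by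
    intro i h1 h2
    simp only [rightPosSeq]
    rw [if_neg (by omega), if_neg (by omega), if_pos h2]
  have hB4 : ∀ i, ℓ < i → rightPosSeq ℓ m y r i = 0 := by
    intro i h
    simp only [rightPosSeq]
    rw [if_neg (by omega), if_neg (by omega), if_neg (by omega)]
  have hB0 : rightPosSeq ℓ m y r 0 = 0 := by
    rw [hB1 0 (by omega), hA0]
  have hxdef : rightMap ℓ m y r = fromPos ℓ m (rightPosSeq ℓ m y r) := rfl
  have hxpos : ∀ i, dyckPos ℓ m (rightMap ℓ m y r) i = rightPosSeq ℓ m y r i := by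
    intro i
    rcases le_or_gt i ℓ with hi | hi
    · rw [hxdef]
      exact dyckPos_fromPos ℓ m _ hB0 i hi
    · rw [dyckPos, if_neg (by omega), hB4 i hi]
  -- IsDyck
  have hdyck : IsDyck ℓ m (rightMap ℓ m y r) := by
    rw [hxdef]
    refine isDyck_fromPos ℓ m _ hB0 (hB4 (ℓ+1) (by omega)) ?_ ?_
    · intro i h1 h2
      by_cases h3 : i ≤ r
      · rw [hB1 i h3]
        exact hAnn i h2
      · by_cases h4 : i = r+1
        · rw [h4, hB2]
          have := hAnn ℓ (le_refl ℓ)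
          linarith
        · rw [hB3 i (by omega) h2]
          exact hAnn (i-1) (by omega)
    · intro i hi
      by_cases h1 : i < r
      · rw [hB1 i (by omega), hB1 (i+1) (by omega)]
        exact hstepA i (by omega)
      · by_cases h2 : i = r
        · subst h2
          rw [hB2, hB1 i le_rfl]
          omega
        · by_cases h3 : i = r+1
          · subst h3
            by_cases h4 : r+1 = ℓ
            · rw [hB2, show r+1+1 = ℓ+1 by omega, hB4 (ℓ+1) (by omega)]
              have := hAnn ℓ (le_refl ℓ)
              linarith
            · rw [hB2, show r+1+1 = r+2 by omega, hB3 (r+2) (by omega) (by omega),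
                show r+2-1 = r+1 by omega]
              have h5 := hstepA r (by omega)
              linarith
          · by_cases h5 : i = ℓ
            · rw [h5, hB4 (ℓ+1) (by omega), hB3 ℓ (by omega) le_rfl]
              have := hAnn (ℓ-1) (by omega)
              linarith
            · rw [hB3 i (by omega) (by omega), hB3 (i+1) (by omega) (by omega),
                show i+1-1 = i by omega]
              have h6 := hstepA (i-1) (by omega)
              rw [show i-1+1 = i by omega] at h6
              exact h6
  -- x 0 ≠ m
  have hx0 : rightMap ℓ m y r 0
      = (m:ℤ) + rightPosSeq ℓ m y r 0 - rightPosSeq ℓ m y r 1 := by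
    rw [hxdef]
    simp only [fromPos]
    rw [if_pos (Nat.zero_le ℓ)]
  have hB1pos : 0 < rightPosSeq ℓ m y r 1 := by
    rcases Nat.eq_zero_or_pos r with rfl | hrpos
    · rw [show (1:ℕ) = 0 + 1 from rfl, hB2]
      have := hAnn ℓ (le_refl ℓ)
      linarith
    · rw [hB1 1 hrpos]
      by_cases h : r = 1
      · subst h
        have h2 := hminpt 0 (by omega)
        rw [hA0] at h2
        linarith [hmem]
      · have h2 := hgap 0 (by omega)
        rw [hA0] at h2
        have h3 := hstepA 1 (by omega)
        rw [show (0:ℕ) + 2 = 1 + 1 by omega] at h2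
        linarith
  have hne : rightMap ℓ m y r 0 ≠ (m:ℤ) := by
    rw [hx0, hB0]
    have := hB1pos
    omega
  -- Leftable
  have hpair : dyckPair ℓ m (rightMap ℓ m y r) = r := by
    have hmemS' : r ∈ {r' : ℕ | r' < ℓ ∧ -(m:ℤ) ≤ dyckPos ℓ m (rightMap ℓ m y r) r'
        - dyckPos ℓ m (rightMap ℓ m y r) (r'+2)} := by
      refine ⟨hrl, ?_⟩
      rw [hxpos r, hxpos (r+2), hB1 r le_rfl]
      by_cases h : r + 2 ≤ ℓ
      · rw [hB3 (r+2) le_rfl h, show r+2-1 = r+1 by omega]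
        have := hstepA r hrl
        linarith
      · rw [hB4 (r+2) (by omega)]
        have := hAnn r hrl.le
        linarith
    have hmins' : ∀ j, j < r → j ∉ {r' : ℕ | r' < ℓ ∧ -(m:ℤ)
        ≤ dyckPos ℓ m (rightMap ℓ m y r) r' - dyckPos ℓ m (rightMap ℓ m y r) (r'+2)} := by
      intro j hj hmem'
      obtain ⟨_, h2⟩ := hmem'
      rw [hxpos j, hxpos (j+2), hB1 j (by omega)] at h2
      by_cases h : j + 2 ≤ r
      · rw [hB1 (j+2) h] at h2
        have := hgap j h
        linarith
      · rw [show j + 2 = r + 1 by omega, hB2] at h2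
        have := hminpt j hj
        linarith
    have hSne' : {r' : ℕ | r' < ℓ ∧ -(m:ℤ) ≤ dyckPos ℓ m (rightMap ℓ m y r) r'
        - dyckPos ℓ m (rightMap ℓ m y r) (r'+2)}.Nonempty := ⟨r, hmemS'⟩
    refine le_antisymm (Nat.sInf_le hmemS') ?_
    by_contra hcon
    push_neg at hcon
    have hin := Nat.sInf_mem hSne'
    exact hmins' _ hcon hin
  have hleft2 : dyckPos ℓ m (rightMap ℓ m y r) (r+1)
      - dyckPos ℓ m (rightMap ℓ m y r) ℓ ≤ (m:ℤ) + 1 := by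
    rw [hxpos (r+1), hxpos ℓ]
    by_cases h : r + 1 = ℓ
    · rw [← h]
      linarith
    · rw [hB2, hB3 ℓ (by omega) le_rfl]
      have h2 := hstepA (ℓ-1) (by omega)
      rw [show ℓ-1+1 = ℓ by omega] at h2
      linarith
  -- leftMap x r = y
  have hLeft : leftPosSeq ℓ m (rightMap ℓ m y r) r = dyckPos ℓ m y := by
    funext i
    simp only [leftPosSeq]
    by_cases h1 : i ≤ r
    · rw [if_pos h1, hxpos i, hB1 i h1]
    · rw [if_neg h1]
      by_cases h2 : i < ℓ
      · rw [if_pos h2, hxpos (i+1), hB3 (i+1) (by omega) (by omega),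
          show i+1-1 = i by omega]
      · rw [if_neg h2]
        by_cases h3 : i = ℓ
        · rw [if_pos h3, hxpos (r+1), hB2, h3]
          ring
        · rw [if_neg h3, dyckPos, if_neg (by omega)]
  have hrecon : fromPos ℓ m (dyckPos ℓ m y) = y := by
    funext i
    simp only [fromPos]
    by_cases h1 : i ≤ ℓ
    · rw [if_pos h1]
      by_cases h2 : i < ℓ
      · exact (step_eq ℓ m y i h2).symm
      · have h3 : i = ℓ := by omega
        rw [h3, show dyckPos ℓ m y (ℓ+1) = 0 from by rw [dyckPos, if_neg (by omega)]]
        linarith [hyl]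
    · rw [if_neg h1]
      exact (hy4 i (by omega)).symm
  have hleftmap : leftMap ℓ m (rightMap ℓ m y r) r = y := by
    show fromPos ℓ m (leftPosSeq ℓ m (rightMap ℓ m y r) r) = y
    rw [hLeft, hrecon]
  -- degr
  have hdegr : degr ℓ m (rightMap ℓ m y r) = degr ℓ m y := by
    rw [degr_eq ℓ m (rightMap ℓ m y r), degr_eq ℓ m y,
      show dyckPos ℓ m (rightMap ℓ m y r) = rightPosSeq ℓ m y r from funext hxpos]
    exact SS_eq ℓ r (m:ℤ) (dyckPos ℓ m y) (rightPosSeq ℓ m y r) hm' hrl hA0 hAnn hstepA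
      (by linarith [hmem]) hminpt hArl hB1 hB2 hB3
  -- area
  have harea : area ℓ m (rightMap ℓ m y r) = area ℓ m y + 1 := by
    rw [area, area, show Finset.Icc 1 ℓ = Finset.Ioc 0 ℓ from Finset.Icc_add_one_left_eq_Ioc 0 ℓ]
    rw [Finset.sum_congr rfl fun i _ => hxpos i]
    have a1 : ∑ i ∈ Finset.Ioc 0 ℓ, rightPosSeq ℓ m y r i
        = (∑ i ∈ Finset.Ioc 0 r, rightPosSeq ℓ m y r i)
          + ∑ i ∈ Finset.Ioc r ℓ, rightPosSeq ℓ m y r i :=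
      (Finset.sum_Ioc_consecutive _ (by omega) (by omega)).symm
    have a2 : ∑ i ∈ Finset.Ioc r ℓ, rightPosSeq ℓ m y r i
        = rightPosSeq ℓ m y r (r+1) + ∑ i ∈ Finset.Ioc (r+1) ℓ, rightPosSeq ℓ m y r i :=
      sum_Ioc_bot _ r ℓ hrl
    have a3 : ∑ i ∈ Finset.Ioc 0 r, rightPosSeq ℓ m y r i
        = ∑ i ∈ Finset.Ioc 0 r, dyckPos ℓ m y i := by
      refine Finset.sum_congr rfl fun i hi => ?_
      simp only [Finset.mem_Ioc] at hi
      exact hB1 i hi.2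
    have a4 : ∑ i ∈ Finset.Ioc (r+1) ℓ, rightPosSeq ℓ m y r i
        = ∑ i ∈ Finset.Ioc r (ℓ-1), dyckPos ℓ m y i := by
      have h' : ∀ i ∈ Finset.Ioc (r+1) ℓ, rightPosSeq ℓ m y r i
          = (fun k => dyckPos ℓ m y k) (i-1) := by
        intro i hi
        simp only [Finset.mem_Ioc] at hi
        exact hB3 i (by omega) (by omega)
      rw [Finset.sum_congr rfl h',
        sum_shift_down (fun k => dyckPos ℓ m y k) (r+1) ℓ (by omega)]
      simp only [Nat.add_sub_cancel]
    have a5 : ∑ i ∈ Finset.Ioc 0 ℓ, dyckPos ℓ m y i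
        = (∑ i ∈ Finset.Ioc 0 r, dyckPos ℓ m y i)
          + ∑ i ∈ Finset.Ioc r ℓ, dyckPos ℓ m y i :=
      (Finset.sum_Ioc_consecutive _ (by omega) (by omega)).symm
    have a6 : ∑ i ∈ Finset.Ioc r ℓ, dyckPos ℓ m y i
        = (∑ i ∈ Finset.Ioc r (ℓ-1), dyckPos ℓ m y i) + dyckPos ℓ m y ℓ :=
      sum_Ioc_top _ r ℓ hrl
    rw [hB2] at a2
    linarith
  exact ⟨hdyck, hne, ⟨hpair, hleft2⟩, hleftmap, hdegr, harea⟩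
end

section
/- Let m ≥ 1, ℓ ≥ 1, and let x ∈ T_{ℓ,m} with degr(x) < (ℓ−1)m, with position coordinates [a_0,a_1,…,a_ℓ]. Then a_j ≤ m for all 0 ≤ j ≤ ℓ. -/
open Finset

lemma dyckPos_eq (ℓ m : ℕ) (x : ℕ → ℤ) (t : ℕ) (ht : t ≤ ℓ) :
    dyckPos ℓ m x t = ∑ k ∈ Finset.range t, ((m:ℤ) - x k) := by
  simp [dyckPos, ht, pSum, Finset.sum_sub_distrib, mul_comm]

lemma sum_Icc_eq (ℓ m : ℕ) (x : ℕ → ℤ) (i j : ℕ) (hij : i ≤ j + 1) (hj : j + 1 ≤ ℓ) :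
    ∑ k ∈ Finset.Icc i j, ((m:ℤ) - x k) = dyckPos ℓ m x (j+1) - dyckPos ℓ m x i := by
  rw [dyckPos_eq ℓ m x (j+1) hj, dyckPos_eq ℓ m x i (by omega),
    ← Finset.Ico_add_one_right_eq_Icc, Finset.sum_Ico_eq_sub _ hij]

lemma telesc (m : ℕ) (x A : ℕ → ℤ) (t : ℤ) (hx : ∀ i, 0 ≤ x i) (j : ℕ)
    (hstep : ∀ u, u ≤ j → A (u+1) = A u + m - x u)
    (ht : t = A (j+1)) :
    ∀ n u, u + n = j + 1 →
      max 0 (A u - t - 1) ≤ ∑ i ∈ Finset.Icc u j, min (x i) (max 0 (A i - t - 1)) := by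
  intro n
  induction n with
  | zero =>
    intro u hu
    have : u = j + 1 := by omega
    subst this
    rw [Finset.Icc_eq_empty (by omega), Finset.sum_empty, ht]
    omega
  | succ n ih =>
    intro u hu
    have hu' : u ≤ j := by omega
    have hins : Finset.Icc u j = insert u (Finset.Icc (u+1) j) := by
      ext k; simp only [Finset.mem_Icc, Finset.mem_insert]; omega
    rw [hins, Finset.sum_insert (by simp)]
    have h1 := ih (u+1) (by omega)
    have h2 := hstep u hu'
    have h3 := hx u
    have h4 : (0:ℤ) ≤ (m:ℤ) := by positivity
    omega

/-- Claim `fitin`: if `x ∈ 𝐓_{ℓ,m}` has `degr(x) < (ℓ−1)m`, then all position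
coordinates of `x` are at most `m`. -/
theorem statement8 (ℓ m : ℕ) (hm : 1 ≤ m) (hl : 1 ≤ ℓ) (x : ℕ → ℤ)
    (hx : IsDyck ℓ m x) (hx0 : x 0 = (m : ℤ))
    (hdeg : degr ℓ m x < (((ℓ - 1) * m : ℕ) : ℤ)) :
    ∀ j ≤ ℓ, dyckPos ℓ m x j ≤ (m : ℤ) := by
  obtain ⟨hxnn, hmid, hend, hzero⟩ := hx
  intro s hs
  by_contra hgt
  push_neg at hgt
  set A : ℕ → ℤ := dyckPos ℓ m x with hA
  have hm0 : (0:ℤ) ≤ (m:ℤ) := by positivity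
  have hA0 : A 0 = 0 := by simp [hA, dyckPos, pSum]
  have hA1 : A 1 = 0 := by
    simp [hA, dyckPos, hl, pSum, Finset.sum_range_one, hx0]
  have hApos : ∀ i, i ≤ ℓ → 0 ≤ A i := by
    intro i hi
    rcases Nat.eq_zero_or_pos i with h0 | h0
    · subst h0; rw [hA0]
    · have h1 := hmid (i - 1) (by omega)
      rw [show i - 1 + 1 = i from by omega] at h1
      have hic : ((i - 1 : ℕ) : ℤ) + 1 = (i : ℤ) := by omega
      rw [hic] at h1
      simp only [hA, dyckPos, hi, if_pos]
      linarith
  have hstep : ∀ u, u + 1 ≤ ℓ → A (u+1) = A u + m - x u := by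
    intro u hu
    simp only [hA, dyckPos, hu, show u ≤ ℓ from by omega, if_pos, pSum,
      Finset.sum_range_succ]
    push_cast; ring
  have hs2 : 2 ≤ s := by
    by_contra h
    interval_cases s
    · rw [hA0] at hgt; omega
    · rw [hA1] at hgt; omega
  have hl2 : 2 ≤ ℓ := le_trans hs2 hs
  set n := ℓ - 1 with hn
  set d : ℕ → ℤ := fun k => max 0 ((m:ℤ) - A (k+1)) with hd
  have hdnn : ∀ k, 0 ≤ d k := fun k => le_max_left _ _
  have hds : d (s-1) = 0 := by
    simp only [hd]
    rw [show s - 1 + 1 = s from by omega]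
    omega
  -- formulas for deltaM, deltaP
  have hdm : ∀ i k, 1 ≤ i → i ≤ k → k ≤ n →
      deltaM m x i k = min (x (i-1)) (max 0 (A (k+1) - A i)) := by
    intro i k h1 h2 h3
    unfold deltaM
    rw [sum_Icc_eq ℓ m x i k (by omega) (by omega)]
  have hdp : ∀ i k, 1 ≤ i → i ≤ k → k ≤ n →
      deltaP m x i k = min (x i) (max 0 (A i - A (k+1) - 1)) := by
    intro i k h1 h2 h3
    unfold deltaP
    have hneg : ∑ r ∈ Finset.Icc i k, (x r - (m:ℤ)) =
        -(∑ r ∈ Finset.Icc i k, ((m:ℤ) - x r)) := by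
      rw [← Finset.sum_neg_distrib]
      exact Finset.sum_congr rfl fun r _ => by ring
    rw [hneg, sum_Icc_eq ℓ m x i k (by omega) (by omega)]
    rw [← hA]
    ring_nf
  have hdmnn : ∀ i k, 0 ≤ deltaM m x i k := by
    intro i k; unfold deltaM; exact le_min (hxnn _) (le_max_left _ _)
  have hdpnn : ∀ i k, 0 ≤ deltaP m x i k := by
    intro i k; unfold deltaP; exact le_min (hxnn _) (le_max_left _ _)
  -- bound for degrM
  have hrow1 : ∑ k ∈ Finset.Icc 1 n, deltaM m x 1 k
      = ∑ k ∈ Finset.Icc 1 n, ((m:ℤ) - d k) := by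
    refine Finset.sum_congr rfl fun k hk => ?_
    rw [Finset.mem_Icc] at hk
    rw [hdm 1 k le_rfl hk.1 hk.2, hx0, hA1]
    have := hApos (k+1) (by omega)
    simp only [hd]
    omega
  have hrowi : ∀ i, 2 ≤ i → i ≤ s - 1 →
      d (i-1) ≤ ∑ k ∈ Finset.Icc i n, deltaM m x i k := by
    intro i h2 h3
    have hmem : s - 1 ∈ Finset.Icc i n := by rw [Finset.mem_Icc]; omega
    refine le_trans ?_ (Finset.single_le_sum (fun k _ => hdmnn i k) hmem)
    rw [hdm i (s-1) (by omega) (by omega) (by omega),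
      show s - 1 + 1 = s from by omega]
    have hxi : x (i-1) = m + A (i-1) - A i := by
      have := hstep (i-1) (by omega)
      rw [show i - 1 + 1 = i from by omega] at this
      linarith
    have h4 := hApos (i-1) (by omega)
    have h5 := hgt
    have h6 := hxnn (i-1)
    simp only [hd]
    rw [show i - 1 + 1 = i from by omega]
    omega
  have hM : (∑ k ∈ Finset.Icc 1 n, ((m:ℤ) - d k))
      + ∑ i ∈ Finset.Icc 2 (s-1), d (i-1) ≤ degrM ℓ m x := by
    unfold degrM
    rw [← hn]
    have hsplit : Finset.Icc 1 n = insert 1 (Finset.Icc 2 n) := by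
      ext k; simp only [Finset.mem_Icc, Finset.mem_insert]; omega
    have hsub : ∑ i ∈ Finset.Icc 2 (s-1), d (i-1)
        ≤ ∑ i ∈ Finset.Icc 2 n, ∑ k ∈ Finset.Icc i n, deltaM m x i k := by
      calc ∑ i ∈ Finset.Icc 2 (s-1), d (i-1)
          ≤ ∑ i ∈ Finset.Icc 2 (s-1), ∑ k ∈ Finset.Icc i n, deltaM m x i k := by
            refine Finset.sum_le_sum fun i hi => ?_
            rw [Finset.mem_Icc] at hi
            exact hrowi i hi.1 hi.2
        _ ≤ ∑ i ∈ Finset.Icc 2 n, ∑ k ∈ Finset.Icc i n, deltaM m x i k := by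
            refine Finset.sum_le_sum_of_subset_of_nonneg ?_
              (fun i _ _ => Finset.sum_nonneg fun k _ => hdmnn i k)
            intro i hi
            rw [Finset.mem_Icc] at hi ⊢
            omega
    calc (∑ k ∈ Finset.Icc 1 n, ((m:ℤ) - d k)) + ∑ i ∈ Finset.Icc 2 (s-1), d (i-1)
        ≤ (∑ k ∈ Finset.Icc 1 n, deltaM m x 1 k)
          + ∑ i ∈ Finset.Icc 2 n, ∑ k ∈ Finset.Icc i n, deltaM m x i k := by
          rw [hrow1]; linarith
      _ = ∑ i ∈ insert 1 (Finset.Icc 2 n), ∑ k ∈ Finset.Icc i n, deltaM m x i k := by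
          rw [Finset.sum_insert (by simp)]
      _ = ∑ i ∈ Finset.Icc 1 n, ∑ k ∈ Finset.Icc i n, deltaM m x i k := by
          rw [← hsplit]
  -- bound for degrP
  have hP : ∑ k ∈ Finset.Icc s n, d k ≤ degrP ℓ m x := by
    unfold degrP
    rw [← hn]
    have h1 : ∑ i ∈ Finset.Icc s n, ∑ k ∈ Finset.Icc i n, deltaP m x i k
        ≤ ∑ i ∈ Finset.Icc 1 n, ∑ k ∈ Finset.Icc i n, deltaP m x i k := by
      refine Finset.sum_le_sum_of_subset_of_nonneg ?_
        (fun i _ _ => Finset.sum_nonneg fun k _ => hdpnn i k)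
      intro i hi
      rw [Finset.mem_Icc] at hi ⊢
      omega
    refine le_trans ?_ h1
    rw [Finset.sum_comm' (t' := Finset.Icc s n) (s' := fun k => Finset.Icc s k)
      (fun i k => by simp only [Finset.mem_Icc]; omega)]
    refine Finset.sum_le_sum fun k hk => ?_
    rw [Finset.mem_Icc] at hk
    have htel := telesc m x A (A (k+1)) hxnn k
      (fun u hu => hstep u (by omega)) rfl (k + 1 - s) s (by omega)
    have heq : ∑ i ∈ Finset.Icc s k, deltaP m x i k
        = ∑ i ∈ Finset.Icc s k, min (x i) (max 0 (A i - A (k+1) - 1)) := by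
      refine Finset.sum_congr rfl fun i hi => ?_
      rw [Finset.mem_Icc] at hi
      exact hdp i k (by omega) hi.2 hk.2
    rw [heq]
    refine le_trans ?_ htel
    simp only [hd]
    omega
  -- final arithmetic
  have hcard : (Finset.Icc 1 n).card = n := by
    rw [Nat.card_Icc]; omega
  have hsum1 : ∑ k ∈ Finset.Icc 1 n, ((m:ℤ) - d k)
      = (n:ℤ) * m - ∑ k ∈ Finset.Icc 1 n, d k := by
    rw [Finset.sum_sub_distrib, Finset.sum_const, hcard]
    push_cast; ring
  have hsplit2 : ∑ k ∈ Finset.Icc 1 n, d k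
      = (∑ k ∈ Finset.Ico 1 (s-1), d k) + d (s-1) + ∑ k ∈ Finset.Ico s (n+1), d k := by
    rw [← Finset.Ico_add_one_right_eq_Icc]
    rw [← Finset.sum_Ico_consecutive d (show 1 ≤ s-1 from by omega)
      (show s - 1 ≤ n + 1 from by omega)]
    rw [← Finset.sum_Ico_consecutive d (show s-1 ≤ s from by omega)
      (show s ≤ n + 1 from by omega)]
    have : Finset.Ico (s-1) s = {s-1} := by
      ext k; simp only [Finset.mem_Ico, Finset.mem_singleton]; omega
    rw [this, Finset.sum_singleton]
    ring
  have hreidx : ∑ i ∈ Finset.Icc 2 (s-1), d (i-1) = ∑ k ∈ Finset.Ico 1 (s-1), d k := by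
    rw [← Finset.Ico_add_one_right_eq_Icc, show s - 1 + 1 = s from by omega,
      Finset.sum_Ico_eq_sum_range, Finset.sum_Ico_eq_sum_range]
    refine Finset.sum_congr (by congr 1; try omega) fun i _ => ?_
    congr 1; omega
  have hIccIco : ∑ k ∈ Finset.Icc s n, d k = ∑ k ∈ Finset.Ico s (n+1), d k := by
    rw [← Finset.Ico_add_one_right_eq_Icc]
  have hfin : ((n * m : ℕ) : ℤ) ≤ degr ℓ m x := by
    have : (n:ℤ) * m ≤ degr ℓ m x := by
      unfold degr
      rw [hsum1] at hM
      rw [hsplit2, hds, hreidx] at hM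
      rw [hIccIco] at hP
      linarith
    calc ((n * m : ℕ) : ℤ) = (n:ℤ) * m := by push_cast; ring
      _ ≤ degr ℓ m x := this
  omega
end

section
/- Let m ≥ 1 and ℓ ≥ 1. There exists an involution ι on the set M_{m×ℓ} such that for every M ∈ M_{m×ℓ}: w(M) = h(ι(M)), h(M) = w(ι(M)), and |M| = |ι(M)|. -/
open Finset

namespace Statement10Aux

/-- The number of non-`∗` entries: the boundary of the non-`none` prefix in
row-reading index coordinates. -/
noncomputable def matN (ℓ : ℕ) (M : ℕ → ℕ → Option Bool) : ℕ :=
  sInf {k | M (k / ℓ) (k % ℓ) = none}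

/-- Reverse the row-reading order of the non-`∗` prefix and complement bits. -/
noncomputable def flipMat (m ℓ : ℕ) (M : ℕ → ℕ → Option Bool) : ℕ → ℕ → Option Bool :=
  fun i j =>
    if i < m ∧ j < ℓ ∧ i * ℓ + j < matN ℓ M then
      Option.map (fun b => !b)
        (M ((matN ℓ M - 1 - (i * ℓ + j)) / ℓ) ((matN ℓ M - 1 - (i * ℓ + j)) % ℓ))
    else none

/-- Index reversal on positions. -/
def rev (ℓ N : ℕ) : ℕ × ℕ → ℕ × ℕ :=
  fun p => ((N - 1 - (p.1 * ℓ + p.2)) / ℓ, (N - 1 - (p.1 * ℓ + p.2)) % ℓ)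

lemma div_lt' {a m ℓ : ℕ} (h : a < m * ℓ) : a / ℓ < m :=
  Nat.div_lt_of_lt_mul (by rwa [mul_comm])

lemma divrec (a ℓ : ℕ) : a / ℓ * ℓ + a % ℓ = a := by
  rw [mul_comm]; exact Nat.div_add_mod a ℓ

lemma idx_div {ℓ i j : ℕ} (hj : j < ℓ) : (i * ℓ + j) / ℓ = i := by
  rw [mul_comm, Nat.mul_add_div (by omega), Nat.div_eq_of_lt hj, add_zero]

lemma idx_mod {ℓ i j : ℕ} (hj : j < ℓ) : (i * ℓ + j) % ℓ = j := by
  rw [mul_comm, Nat.mul_add_mod, Nat.mod_eq_of_lt hj]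

lemma idx_lt_iff {ℓ i j i' j' : ℕ} (hj : j < ℓ) (hj' : j' < ℓ) :
    i * ℓ + j < i' * ℓ + j' ↔ (i < i' ∨ (i = i' ∧ j < j')) := by
  rcases Nat.lt_trichotomy i i' with h | h | h
  · have h2 : (i + 1) * ℓ ≤ i' * ℓ := Nat.mul_le_mul_right _ h
    rw [add_mul, one_mul] at h2
    constructor
    · intro _; exact Or.inl h
    · intro _; omega
  · subst h; omega
  · have h2 : (i' + 1) * ℓ ≤ i * ℓ := Nat.mul_le_mul_right _ h
    rw [add_mul, one_mul] at h2
    constructor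
    · intro _; omega
    · rintro (h3 | ⟨h3, _⟩) <;> omega

lemma contact_iff {ℓ i j i' j' : ℕ} (hj : j < ℓ) (hj' : j' < ℓ) :
    ((i' = i ∧ j < j') ∨ (i' = i + 1 ∧ j' ≤ j)) ↔
      (i * ℓ + j < i' * ℓ + j' ∧ i' * ℓ + j' ≤ i * ℓ + j + ℓ) := by
  rcases Nat.lt_trichotomy i' i with h | h | h
  · have h2 : (i' + 1) * ℓ ≤ i * ℓ := Nat.mul_le_mul_right _ h
    rw [add_mul, one_mul] at h2
    constructor
    · rintro (⟨h3, _⟩ | ⟨h3, _⟩) <;> omega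
    · intro h3; omega
  · subst h; omega
  · rcases Nat.lt_or_ge (i + 1) i' with h1 | h1
    · have h2 : (i + 2) * ℓ ≤ i' * ℓ := Nat.mul_le_mul_right _ h1
      rw [add_mul] at h2
      constructor
      · rintro (⟨h3, _⟩ | ⟨h3, _⟩) <;> omega
      · intro h3; omega
    · have h4 : i' = i + 1 := by omega
      subst h4
      have h2 : (i + 1) * ℓ = i * ℓ + ℓ := by rw [add_mul, one_mul]
      omega

lemma div_mod_order {ℓ a b : ℕ} (hl : 0 < ℓ) (h : a < b) :
    a / ℓ < b / ℓ ∨ (a / ℓ = b / ℓ ∧ a % ℓ < b % ℓ) := by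
  have h1 := divrec a ℓ
  have h2 := divrec b ℓ
  have h3 : a / ℓ ≤ b / ℓ := Nat.div_le_div_right h.le
  rcases Nat.lt_or_ge (a / ℓ) (b / ℓ) with h4 | h4
  · exact Or.inl h4
  · have h5 : a / ℓ = b / ℓ := le_antisymm h3 h4
    right
    refine ⟨h5, ?_⟩
    rw [h5] at h1
    omega

section Good

variable {m ℓ : ℕ} {M : ℕ → ℕ → Option Bool}

lemma matN_le (hl : 0 < ℓ) (hM : IsGoodMatrix m ℓ M) : matN ℓ M ≤ m * ℓ := by
  apply Nat.sInf_le
  show M ((m * ℓ) / ℓ) ((m * ℓ) % ℓ) = none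
  rw [Nat.mul_div_cancel _ hl]
  exact hM.1 _ _ (Or.inl le_rfl)

lemma e_none_step (hl : 0 < ℓ) (hM : IsGoodMatrix m ℓ M) {k : ℕ}
    (h : M (k / ℓ) (k % ℓ) = none) : M ((k + 1) / ℓ) ((k + 1) % ℓ) = none := by
  rcases Nat.lt_or_ge (k + 1) (m * ℓ) with hk | hk
  · have hk0 : k < m * ℓ := by omega
    exact hM.2.1 _ _ _ _ (div_lt' hk0) (Nat.mod_lt _ hl)
      (div_lt' hk) (Nat.mod_lt _ hl) h
      (div_mod_order hl (Nat.lt_succ_self k))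
  · exact hM.1 _ _ (Or.inl ((Nat.le_div_iff_mul_le hl).2 hk))

lemma e_none_iff (hl : 0 < ℓ) (hM : IsGoodMatrix m ℓ M) (k : ℕ) :
    M (k / ℓ) (k % ℓ) = none ↔ matN ℓ M ≤ k := by
  constructor
  · intro h; exact Nat.sInf_le h
  · intro h
    have hne : {k | M (k / ℓ) (k % ℓ) = none}.Nonempty := by
      refine ⟨m * ℓ, ?_⟩
      show M ((m * ℓ) / ℓ) ((m * ℓ) % ℓ) = none
      rw [Nat.mul_div_cancel _ hl]
      exact hM.1 _ _ (Or.inl le_rfl)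
    have hbase : M (matN ℓ M / ℓ) (matN ℓ M % ℓ) = none := Nat.sInf_mem hne
    obtain ⟨d, rfl⟩ := Nat.exists_eq_add_of_le h
    clear h
    induction d with
    | zero => simpa using hbase
    | succ d ih => exact e_none_step hl hM ih

lemma e_lt_matN (hl : 0 < ℓ) (hM : IsGoodMatrix m ℓ M) {k : ℕ} (h : k < matN ℓ M) :
    ∃ b, M (k / ℓ) (k % ℓ) = some b := by
  rcases hk : M (k / ℓ) (k % ℓ) with _ | b
  · exact absurd ((e_none_iff hl hM k).1 hk) (by omega)
  · exact ⟨b, rfl⟩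

lemma matN_pos (hl : 0 < ℓ) (hM : IsGoodMatrix m ℓ M) : 0 < matN ℓ M := by
  by_contra h
  have := (e_none_iff hl hM 0).2 (by omega)
  rw [Nat.zero_div, Nat.zero_mod, hM.2.2.1] at this
  exact nomatch this

lemma idx_lt_matN (hl : 0 < ℓ) (hM : IsGoodMatrix m ℓ M) {i j : ℕ} (hj : j < ℓ)
    (h : M i j ≠ none) : i * ℓ + j < matN ℓ M := by
  by_contra hge
  apply h
  have := (e_none_iff hl hM (i * ℓ + j)).2 (by omega)
  rwa [idx_div hj, idx_mod hj] at this

/-- The last non-`∗` entry of a good matrix is `1`. -/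
lemma matN_last (hl : 0 < ℓ) (hm : 0 < m) (hM : IsGoodMatrix m ℓ M) :
    M ((matN ℓ M - 1) / ℓ) ((matN ℓ M - 1) % ℓ) = some true := by
  have hNpos : 0 < matN ℓ M := matN_pos hl hM
  have hNle : matN ℓ M ≤ m * ℓ := matN_le hl hM
  obtain ⟨b, hb⟩ := e_lt_matN hl hM (show matN ℓ M - 1 < matN ℓ M by omega)
  have hi : (matN ℓ M - 1) / ℓ < m := div_lt' (by omega)
  have hjlt : (matN ℓ M - 1) % ℓ < ℓ := Nat.mod_lt _ hl
  have hrec : ((matN ℓ M - 1) / ℓ) * ℓ + (matN ℓ M - 1) % ℓ = matN ℓ M - 1 := by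
    have := divrec (matN ℓ M - 1) ℓ
    omega
  rcases hM.2.2.2.1 _ _ hi hjlt (by rw [hb]; simp) with h | ⟨i', j', hi', hj', hord, hne⟩
  · exact h
  · exfalso
    have hidx : i' * ℓ + j' < matN ℓ M := idx_lt_matN hl hM hj' hne
    have := (idx_lt_iff hjlt hj').2 hord
    omega

lemma flip_apply (hl : 0 < ℓ) {i j : ℕ}
    (hi : i < m) (hj : j < ℓ) (hidx : i * ℓ + j < matN ℓ M) :
    flipMat m ℓ M i j =
      Option.map (fun b => !b)
        (M ((matN ℓ M - 1 - (i * ℓ + j)) / ℓ) ((matN ℓ M - 1 - (i * ℓ + j)) % ℓ)) := by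
  simp only [flipMat]
  rw [if_pos ⟨hi, hj, hidx⟩]

lemma flip_eq_some (hl : 0 < ℓ) (hM : IsGoodMatrix m ℓ M) {i j : ℕ}
    (hi : i < m) (hj : j < ℓ) (hidx : i * ℓ + j < matN ℓ M) :
    ∃ b, M ((matN ℓ M - 1 - (i * ℓ + j)) / ℓ) ((matN ℓ M - 1 - (i * ℓ + j)) % ℓ) = some b ∧
      flipMat m ℓ M i j = some !b := by
  obtain ⟨b, hb⟩ := e_lt_matN hl hM
    (show matN ℓ M - 1 - (i * ℓ + j) < matN ℓ M by
      have := matN_pos hl hM; omega)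
  exact ⟨b, hb, by rw [flip_apply hl hi hj hidx, hb]; rfl⟩

lemma flip_none_iff (hl : 0 < ℓ) (hM : IsGoodMatrix m ℓ M) (i j : ℕ) :
    flipMat m ℓ M i j = none ↔ ¬(i < m ∧ j < ℓ ∧ i * ℓ + j < matN ℓ M) := by
  constructor
  · intro h hc
    obtain ⟨b, _, hb2⟩ := flip_eq_some hl hM hc.1 hc.2.1 hc.2.2
    rw [h] at hb2; exact nomatch hb2
  · intro h; simp only [flipMat]; rw [if_neg h]

lemma flip_good (hl : 0 < ℓ) (hm : 0 < m) (hM : IsGoodMatrix m ℓ M) :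
    IsGoodMatrix m ℓ (flipMat m ℓ M) := by
  have hNpos : 0 < matN ℓ M := matN_pos hl hM
  have hNle : matN ℓ M ≤ m * ℓ := matN_le hl hM
  refine ⟨?_, ?_, ?_, ?_, ?_⟩
  · intro i j h
    rw [flip_none_iff hl hM]
    rintro ⟨h1, h2, _⟩; omega
  · intro i j i' j' hi hj hi' hj' hnone hord
    rw [flip_none_iff hl hM] at hnone ⊢
    have hge : matN ℓ M ≤ i * ℓ + j := by
      by_contra hlt
      exact hnone ⟨hi, hj, by omega⟩
    have := (idx_lt_iff hj hj').2 hord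
    rintro ⟨_, _, hidx'⟩
    omega
  · obtain ⟨b, hb, hb2⟩ := flip_eq_some hl hM hm hl
      (show 0 * ℓ + 0 < matN ℓ M by omega)
    simp only [Nat.zero_mul, Nat.add_zero, Nat.sub_zero] at hb hb2
    have hlast := matN_last hl hm hM
    rw [hlast] at hb
    obtain rfl : b = true := by simpa using hb.symm
    simpa using hb2
  · intro i j hi hj hne
    have hidx : i * ℓ + j < matN ℓ M := by
      by_contra hge
      exact hne ((flip_none_iff hl hM i j).2 (by intro hc; omega))
    rcases Nat.lt_or_ge (i * ℓ + j) (matN ℓ M - 1) with hlt | hge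
    · right
      have hk1 : i * ℓ + j + 1 < m * ℓ := by omega
      have hkrec := divrec (i * ℓ + j + 1) ℓ
      refine ⟨(i * ℓ + j + 1) / ℓ, (i * ℓ + j + 1) % ℓ,
        div_lt' hk1, Nat.mod_lt _ hl, ?_, ?_⟩
      · rw [← idx_lt_iff hj (Nat.mod_lt _ hl)]
        omega
      · rw [ne_eq, flip_none_iff hl hM, not_not]
        exact ⟨div_lt' hk1, Nat.mod_lt _ hl, by omega⟩
    · left
      have heq : i * ℓ + j = matN ℓ M - 1 := by omega
      obtain ⟨b, hb, hb2⟩ := flip_eq_some hl hM hi hj hidx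
      rw [heq] at hb
      simp only [Nat.sub_self, Nat.zero_div, Nat.zero_mod] at hb
      rw [hM.2.2.1] at hb
      obtain rfl : b = false := by simpa using hb.symm
      simpa using hb2
  · intro i j h1 h3
    have hcc : i < m ∧ j < ℓ ∧ i * ℓ + j < matN ℓ M := by
      by_contra hc
      rw [(flip_none_iff hl hM i j).2 hc] at h1
      exact nomatch h1
    have hcc' : i + 1 < m ∧ j < ℓ ∧ (i + 1) * ℓ + j < matN ℓ M := by
      by_contra hc
      rw [(flip_none_iff hl hM (i + 1) j).2 hc] at h3
      exact nomatch h3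
    obtain ⟨b, hb, hb2⟩ := flip_eq_some hl hM hcc.1 hcc.2.1 hcc.2.2
    obtain ⟨b', hb', hb2'⟩ := flip_eq_some hl hM hcc'.1 hcc'.2.1 hcc'.2.2
    rw [h1] at hb2; rw [h3] at hb2'
    obtain rfl : b = true := by cases b <;> simp_all
    obtain rfl : b' = false := by cases b' <;> simp_all
    have hiℓ : (i + 1) * ℓ = i * ℓ + ℓ := by rw [add_mul, one_mul]
    have hpl : (matN ℓ M - 1 - ((i + 1) * ℓ + j)) + ℓ = matN ℓ M - 1 - (i * ℓ + j) := by
      omega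
    have h5 := hM.2.2.2.2 _ _ hb'
    apply h5
    rw [← Nat.add_div_right _ hl, ← Nat.add_mod_right (matN ℓ M - 1 - ((i + 1) * ℓ + j)) ℓ,
      hpl]
    exact hb

lemma matN_flip (hl : 0 < ℓ) (hm : 0 < m) (hM : IsGoodMatrix m ℓ M) :
    matN ℓ (flipMat m ℓ M) = matN ℓ M := by
  have hNpos : 0 < matN ℓ M := matN_pos hl hM
  have hNle : matN ℓ M ≤ m * ℓ := matN_le hl hM
  have hset : {k | flipMat m ℓ M (k / ℓ) (k % ℓ) = none} = Set.Ici (matN ℓ M) := by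
    ext k
    simp only [Set.mem_setOf_eq, Set.mem_Ici]
    rw [flip_none_iff hl hM]
    have hrec := divrec k ℓ
    constructor
    · intro h
      by_contra hc
      push_neg at hc
      exact h ⟨div_lt' (by omega), Nat.mod_lt _ hl, by omega⟩
    · intro h hc
      omega
  rw [show matN ℓ (flipMat m ℓ M) = sInf {k | flipMat m ℓ M (k / ℓ) (k % ℓ) = none} from rfl,
    hset, csInf_Ici]

lemma flip_flip (hl : 0 < ℓ) (hm : 0 < m) (hM : IsGoodMatrix m ℓ M) :
    flipMat m ℓ (flipMat m ℓ M) = M := by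
  have hNpos : 0 < matN ℓ M := matN_pos hl hM
  have hNle : matN ℓ M ≤ m * ℓ := matN_le hl hM
  have hNf : matN ℓ (flipMat m ℓ M) = matN ℓ M := matN_flip hl hm hM
  have hMf : IsGoodMatrix m ℓ (flipMat m ℓ M) := flip_good hl hm hM
  funext i j
  by_cases hc : i < m ∧ j < ℓ ∧ i * ℓ + j < matN ℓ M
  · obtain ⟨hi, hj, hidx⟩ := hc
    obtain ⟨b0, hb0⟩ := e_lt_matN hl hM hidx
    rw [idx_div hj, idx_mod hj] at hb0
    have hkN : matN ℓ M - 1 - (i * ℓ + j) < matN ℓ M := by omega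
    have hkrec := divrec (matN ℓ M - 1 - (i * ℓ + j)) ℓ
    have h1 : flipMat m ℓ (flipMat m ℓ M) i j =
        Option.map (fun b => !b)
          (flipMat m ℓ M ((matN ℓ M - 1 - (i * ℓ + j)) / ℓ)
            ((matN ℓ M - 1 - (i * ℓ + j)) % ℓ)) := by
      rw [flip_apply hl hi hj (by rw [hNf]; exact hidx), hNf]
    have h2 : flipMat m ℓ M ((matN ℓ M - 1 - (i * ℓ + j)) / ℓ)
        ((matN ℓ M - 1 - (i * ℓ + j)) % ℓ) = Option.map (fun b => !b) (M i j) := by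
      rw [flip_apply hl (div_lt' (by omega)) (Nat.mod_lt _ hl) (by omega)]
      have hback : matN ℓ M - 1 -
          (((matN ℓ M - 1 - (i * ℓ + j)) / ℓ) * ℓ + (matN ℓ M - 1 - (i * ℓ + j)) % ℓ)
          = i * ℓ + j := by omega
      rw [hback, idx_div hj, idx_mod hj]
    rw [h1, h2, hb0]
    cases b0 <;> rfl
  · have h1 : flipMat m ℓ (flipMat m ℓ M) i j = none := by
      rw [flip_none_iff hl hMf, hNf]; exact hc
    rw [h1]
    rcases Nat.lt_or_ge i m with hi | hi
    · rcases Nat.lt_or_ge j ℓ with hj | hj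
      · have hge : matN ℓ M ≤ i * ℓ + j := by
          by_contra hlt; exact hc ⟨hi, hj, by omega⟩
        have := (e_none_iff hl hM (i * ℓ + j)).2 hge
        rw [idx_div hj, idx_mod hj] at this
        exact this.symm
      · exact (hM.1 i j (Or.inr hj)).symm
    · exact (hM.1 i j (Or.inl hi)).symm

lemma rev_spec (hl : 0 < ℓ) (hNle : matN ℓ M ≤ m * ℓ) {p : ℕ × ℕ} (hp2 : p.2 < ℓ)
    (hidx : p.1 * ℓ + p.2 < matN ℓ M) :
    (rev ℓ (matN ℓ M) p).1 < m ∧ (rev ℓ (matN ℓ M) p).2 < ℓ ∧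
      (rev ℓ (matN ℓ M) p).1 * ℓ + (rev ℓ (matN ℓ M) p).2 =
        matN ℓ M - 1 - (p.1 * ℓ + p.2) ∧
      rev ℓ (matN ℓ M) (rev ℓ (matN ℓ M) p) = p := by
  have hrec := divrec (matN ℓ M - 1 - (p.1 * ℓ + p.2)) ℓ
  have h1 : (rev ℓ (matN ℓ M) p).1 < m :=
    div_lt' (show matN ℓ M - 1 - (p.1 * ℓ + p.2) < m * ℓ by omega)
  have h2 : (rev ℓ (matN ℓ M) p).2 < ℓ := Nat.mod_lt _ hl
  have h3 : (rev ℓ (matN ℓ M) p).1 * ℓ + (rev ℓ (matN ℓ M) p).2 =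
      matN ℓ M - 1 - (p.1 * ℓ + p.2) := by simp only [rev]; omega
  refine ⟨h1, h2, h3, ?_⟩
  have : rev ℓ (matN ℓ M) (rev ℓ (matN ℓ M) p) =
      ((matN ℓ M - 1 - (matN ℓ M - 1 - (p.1 * ℓ + p.2))) / ℓ,
       (matN ℓ M - 1 - (matN ℓ M - 1 - (p.1 * ℓ + p.2))) % ℓ) := by
    simp only [rev]
    rw [hrec]
  rw [this]
  have hb : matN ℓ M - 1 - (matN ℓ M - 1 - (p.1 * ℓ + p.2)) = p.1 * ℓ + p.2 := by omega
  rw [hb, idx_div hp2, idx_mod hp2]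

lemma flip_val (hl : 0 < ℓ) (hM : IsGoodMatrix m ℓ M) {p : ℕ × ℕ} {c : Bool}
    (h : flipMat m ℓ M p.1 p.2 = some c) :
    p.1 < m ∧ p.2 < ℓ ∧ p.1 * ℓ + p.2 < matN ℓ M ∧
      M (rev ℓ (matN ℓ M) p).1 (rev ℓ (matN ℓ M) p).2 = some (!c) := by
  have hcc : p.1 < m ∧ p.2 < ℓ ∧ p.1 * ℓ + p.2 < matN ℓ M := by
    by_contra hcon
    rw [(flip_none_iff hl hM p.1 p.2).2 hcon] at h
    exact nomatch h
  obtain ⟨b, hb, hb2⟩ := flip_eq_some hl hM hcc.1 hcc.2.1 hcc.2.2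
  rw [h] at hb2
  obtain rfl : b = !c := by cases b <;> cases c <;> simp_all
  exact ⟨hcc.1, hcc.2.1, hcc.2.2, hb⟩

lemma flip_val' (hl : 0 < ℓ) (hM : IsGoodMatrix m ℓ M) {p : ℕ × ℕ} {c : Bool}
    (hp1 : p.1 < m) (hp2 : p.2 < ℓ) (h : M p.1 p.2 = some c) :
    p.1 * ℓ + p.2 < matN ℓ M ∧
      flipMat m ℓ M (rev ℓ (matN ℓ M) p).1 (rev ℓ (matN ℓ M) p).2 = some (!c) := by
  have hNle : matN ℓ M ≤ m * ℓ := matN_le hl hM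
  have hidx : p.1 * ℓ + p.2 < matN ℓ M :=
    idx_lt_matN hl hM hp2 (by rw [h]; simp)
  obtain ⟨h1, h2, h3, _⟩ := rev_spec hl hNle hp2 hidx
  refine ⟨hidx, ?_⟩
  rw [flip_apply hl h1 h2 (by omega), h3]
  have hb : matN ℓ M - 1 - (matN ℓ M - 1 - (p.1 * ℓ + p.2)) = p.1 * ℓ + p.2 := by omega
  rw [hb, idx_div hp2, idx_mod hp2, h]
  rfl

lemma flip_count (hl : 0 < ℓ) (hM : IsGoodMatrix m ℓ M) (c : Bool) :
    ((Finset.range m ×ˢ Finset.range ℓ).filter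
        fun p => flipMat m ℓ M p.1 p.2 = some c).card =
      ((Finset.range m ×ˢ Finset.range ℓ).filter
        fun p => M p.1 p.2 = some (!c)).card := by
  have hNle : matN ℓ M ≤ m * ℓ := matN_le hl hM
  apply Finset.card_nbij' (rev ℓ (matN ℓ M)) (rev ℓ (matN ℓ M))
  · intro a ha
    simp only [Finset.mem_coe, Finset.mem_filter, Finset.mem_product, Finset.mem_range] at ha ⊢
    obtain ⟨_, h2⟩ := ha
    obtain ⟨h1, h2', hidx, hval⟩ := flip_val hl hM h2
    obtain ⟨r1, r2, _, _⟩ := rev_spec hl hNle h2' hidx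
    exact ⟨⟨r1, r2⟩, hval⟩
  · intro a ha
    simp only [Finset.mem_coe, Finset.mem_filter, Finset.mem_product, Finset.mem_range] at ha ⊢
    obtain ⟨⟨hp1, hp2⟩, h2⟩ := ha
    obtain ⟨hidx, hval⟩ := flip_val' hl hM hp1 hp2 h2
    obtain ⟨r1, r2, _, _⟩ := rev_spec hl hNle hp2 hidx
    rw [Bool.not_not] at hval
    exact ⟨⟨r1, r2⟩, hval⟩
  · intro a ha
    simp only [Finset.mem_coe, Finset.mem_filter, Finset.mem_product, Finset.mem_range] at ha
    obtain ⟨_, h2⟩ := ha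
    obtain ⟨h1, h2', hidx, _⟩ := flip_val hl hM h2
    exact (rev_spec hl hNle h2' hidx).2.2.2
  · intro a ha
    simp only [Finset.mem_coe, Finset.mem_filter, Finset.mem_product, Finset.mem_range] at ha
    obtain ⟨⟨hp1, hp2⟩, h2⟩ := ha
    have hidx : a.1 * ℓ + a.2 < matN ℓ M :=
      idx_lt_matN hl hM hp2 (by rw [h2]; simp)
    exact (rev_spec hl hNle hp2 hidx).2.2.2

lemma flip_contact (hl : 0 < ℓ) (hM : IsGoodMatrix m ℓ M) :
    contactCount m ℓ (flipMat m ℓ M) = contactCount m ℓ M := by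
  have hNle : matN ℓ M ≤ m * ℓ := matN_le hl hM
  unfold contactCount
  apply Finset.card_nbij' (fun q => (rev ℓ (matN ℓ M) q.2, rev ℓ (matN ℓ M) q.1))
    (fun q => (rev ℓ (matN ℓ M) q.2, rev ℓ (matN ℓ M) q.1))
  · intro a ha
    simp only [Finset.mem_coe, Finset.mem_filter, Finset.mem_product, Finset.mem_range] at ha ⊢
    obtain ⟨_, hf, ht, hrel⟩ := ha
    obtain ⟨hf1, hf2, hfidx, hfval⟩ := flip_val hl hM hf
    obtain ⟨ht1, ht2, htidx, htval⟩ := flip_val hl hM ht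
    obtain ⟨rf1, rf2, rf3, _⟩ := rev_spec hl hNle hf2 hfidx
    obtain ⟨rt1, rt2, rt3, _⟩ := rev_spec hl hNle ht2 htidx
    have hab := (contact_iff hf2 ht2).1 hrel
    refine ⟨⟨⟨rt1, rt2⟩, rf1, rf2⟩, by simpa using htval, by simpa using hfval, ?_⟩
    rw [contact_iff rt2 rf2, rf3, rt3]
    omega
  · intro a ha
    simp only [Finset.mem_coe, Finset.mem_filter, Finset.mem_product, Finset.mem_range] at ha ⊢
    obtain ⟨⟨⟨hf1, hf2⟩, ht1, ht2⟩, hf, ht, hrel⟩ := ha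
    obtain ⟨hfidx, hfval⟩ := flip_val' hl hM hf1 hf2 hf
    obtain ⟨htidx, htval⟩ := flip_val' hl hM ht1 ht2 ht
    obtain ⟨rf1, rf2, rf3, _⟩ := rev_spec hl hNle hf2 hfidx
    obtain ⟨rt1, rt2, rt3, _⟩ := rev_spec hl hNle ht2 htidx
    have hab := (contact_iff hf2 ht2).1 hrel
    refine ⟨⟨⟨rt1, rt2⟩, rf1, rf2⟩, by simpa using htval, by simpa using hfval, ?_⟩
    rw [contact_iff rt2 rf2, rf3, rt3]
    omega
  · intro a ha
    simp only [Finset.mem_coe, Finset.mem_filter, Finset.mem_product, Finset.mem_range] at ha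
    obtain ⟨_, hf, ht, _⟩ := ha
    obtain ⟨hf1, hf2, hfidx, _⟩ := flip_val hl hM hf
    obtain ⟨ht1, ht2, htidx, _⟩ := flip_val hl hM ht
    have r1 := (rev_spec hl hNle hf2 hfidx).2.2.2
    have r2 := (rev_spec hl hNle ht2 htidx).2.2.2
    show (rev ℓ (matN ℓ M) (rev ℓ (matN ℓ M) a.1), rev ℓ (matN ℓ M) (rev ℓ (matN ℓ M) a.2)) = a
    rw [r1, r2]
  · intro a ha
    simp only [Finset.mem_coe, Finset.mem_filter, Finset.mem_product, Finset.mem_range] at ha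
    obtain ⟨⟨⟨hf1, hf2⟩, ht1, ht2⟩, hf, ht, _⟩ := ha
    have hfidx : a.1.1 * ℓ + a.1.2 < matN ℓ M :=
      idx_lt_matN hl hM hf2 (by rw [hf]; simp)
    have htidx : a.2.1 * ℓ + a.2.2 < matN ℓ M :=
      idx_lt_matN hl hM ht2 (by rw [ht]; simp)
    have r1 := (rev_spec hl hNle hf2 hfidx).2.2.2
    have r2 := (rev_spec hl hNle ht2 htidx).2.2.2
    show (rev ℓ (matN ℓ M) (rev ℓ (matN ℓ M) a.1), rev ℓ (matN ℓ M) (rev ℓ (matN ℓ M) a.2)) = a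
    rw [r1, r2]

end Good

end Statement10Aux


/-- Claim `i`: there is an involution `ι` on `𝐌_{m×ℓ}` interchanging `h` and
`w` and preserving `|·|`. -/
theorem statement10 (m ℓ : ℕ) (hm : 1 ≤ m) (hl : 1 ≤ ℓ) :
    ∃ ι : {M : ℕ → ℕ → Option Bool // IsGoodMatrix m ℓ M} →
          {M : ℕ → ℕ → Option Bool // IsGoodMatrix m ℓ M},
      Function.Involutive ι ∧
      ∀ M, oneCount m ℓ M.1 = zeroCount m ℓ (ι M).1 ∧
        zeroCount m ℓ M.1 = oneCount m ℓ (ι M).1 ∧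
        contactCount m ℓ M.1 = contactCount m ℓ (ι M).1 := by
  have hl0 : 0 < ℓ := hl
  have hm0 : 0 < m := hm
  refine ⟨fun M => ⟨Statement10Aux.flipMat m ℓ M.1, Statement10Aux.flip_good hl0 hm0 M.2⟩,
    ?_, ?_⟩
  · intro M
    exact Subtype.ext (Statement10Aux.flip_flip hl0 hm0 M.2)
  · intro M
    refine ⟨?_, ?_, (Statement10Aux.flip_contact hl0 M.2).symm⟩
    · have h := Statement10Aux.flip_count hl0 M.2 false
      unfold zeroCount oneCount
      simpa using h.symm
    · have h := Statement10Aux.flip_count hl0 M.2 true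
      unfold zeroCount oneCount
      simpa using h.symm
end

section
/- Let m ≥ 1. (i) For every x ∈ D_{2,m}, area(x) + 2·degr(x) ≤ 3m. (ii) For every integer d with 0 ≤ d ≤ m, there exists x ∈ D_{2,m} with degr(x) = d and area(x) + 2·degr(x) = 3m. -/
open Finset

/-- Claim `maxarea`: for every `x ∈ 𝐃_{2,m}`, `area(x) + 2·degr(x) ≤ 3m`, and
for every `0 ≤ d ≤ m` there is `x ∈ 𝐃_{2,m}` with `degr(x) = d` attaining
equality. -/
theorem statement16 (m : ℕ) (hm : 1 ≤ m) :
    (∀ x : ℕ → ℤ, IsDyck 2 m x → area 2 m x + 2 * degr 2 m x ≤ 3 * (m : ℤ)) ∧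
    (∀ d : ℕ, d ≤ m → ∃ x : ℕ → ℤ, IsDyck 2 m x ∧ degr 2 m x = (d : ℤ) ∧
      area 2 m x + 2 * degr 2 m x = 3 * (m : ℤ)) := by
  have hclose : ∀ x : ℕ → ℤ,
      area 2 m x = 3 * (m:ℤ) - 2 * x 0 - x 1 ∧
      degr 2 m x = min (x 1) (max 0 (x 1 - m - 1)) + min (x 0) (max 0 ((m:ℤ) - x 1)) := by
    intro x
    constructor
    · show ∑ i ∈ Finset.Icc 1 2, dyckPos 2 m x i = _
      rw [show Finset.Icc 1 2 = {1, 2} from rfl]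
      simp [dyckPos, pSum, Finset.sum_range_succ]
      ring
    · show (∑ i ∈ Finset.Icc 1 (2-1), ∑ j ∈ Finset.Icc i (2-1), deltaP m x i j) +
        (∑ i ∈ Finset.Icc 1 (2-1), ∑ j ∈ Finset.Icc i (2-1), deltaM m x i j) = _
      norm_num [Finset.Icc_self, deltaP, deltaM]
  constructor
  · intro x hx
    obtain ⟨hnn, hle, hsum, _⟩ := hx
    have h0 := hnn 0
    have h1 := hnn 1
    have h2 := hnn 2
    have hA := hle 0 (by norm_num)
    have hB := hle 1 (by norm_num)
    simp [pSum, Finset.sum_range_succ] at hA hB hsum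
    obtain ⟨ha, hd⟩ := hclose x
    rw [ha, hd]
    push_cast at *
    omega
  · intro d hd
    refine ⟨fun i => if i = 0 then (d:ℤ) else if i = 2 then 3*m - d else 0, ?_, ?_, ?_⟩
    · refine ⟨?_, ?_, ?_, ?_⟩
      · intro i; dsimp only; split_ifs <;> omega
      · intro i hi
        interval_cases i <;>
          simp [pSum, Finset.sum_range_succ] <;> omega
      · simp [pSum, Finset.sum_range_succ]; push_cast; ring
      · intro i hi
        have h0 : i ≠ 0 := by omega
        have h2 : i ≠ 2 := by omega
        simp [h0, h2]
    · obtain ⟨-, hdg⟩ := hclose (fun i => if i = 0 then (d:ℤ) else if i = 2 then 3*m - d else 0)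
      rw [hdg]; simp; omega
    · obtain ⟨ha, hdg⟩ := hclose (fun i => if i = 0 then (d:ℤ) else if i = 2 then 3*m - d else 0)
      rw [ha, hdg]; simp; omega
end

section
/- Let m ≥ 1 and let d ≥ 0 be an integer. Then the map x ↦ area(x) restricts to a bijection from D^d_{2,m} onto the set of integers {a : d ≤ a ≤ 3m−2d} (which is empty when 3m−2d < d). Equivalently, in ℤ[q,t], Σ_{x ∈ D^d_{2,m}} q^{area(x)} t^{3m−d−area(x)} = q^d t^{3m−2d} + q^{d+1} t^{3m−2d−1} + ⋯ + q^{3m−2d−1} t^{d+1} + q^{3m−2d} t^d. -/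
open Finset

lemma degr_two (m : ℕ) (x : ℕ → ℤ) :
    degr 2 m x = min (x 1) (max 0 (x 1 - (m : ℤ) - 1)) + min (x 0) (max 0 ((m : ℤ) - x 1)) := by
  simp [degr, degrP, degrM, deltaP, deltaM, Finset.Icc_self]

lemma area_two (m : ℕ) (x : ℕ → ℤ) :
    area 2 m x = 3 * (m : ℤ) - 2 * x 0 - x 1 := by
  have h : Finset.Icc 1 2 = ({1, 2} : Finset ℕ) := rfl
  simp [area, h, dyckPos, pSum, Finset.sum_range_succ]
  ring

lemma isDyck_two (m : ℕ) (x : ℕ → ℤ) :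
    IsDyck 2 m x ↔ (0 ≤ x 0 ∧ 0 ≤ x 1 ∧ 0 ≤ x 2 ∧ x 0 ≤ (m : ℤ) ∧
      x 0 + x 1 ≤ 2 * (m : ℤ) ∧ x 0 + x 1 + x 2 = 3 * (m : ℤ) ∧ ∀ i, 2 < i → x i = 0) := by
  constructor
  · rintro ⟨h0, h1, h2, h3⟩
    have e1 := h1 0 (by norm_num)
    have e2 := h1 1 (by norm_num)
    simp [pSum, Finset.sum_range_succ] at e1 e2 h2
    exact ⟨h0 0, h0 1, h0 2, by linarith, by linarith, by linarith, h3⟩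
  · rintro ⟨h0, h1, h2, h3, h4, h5, h6⟩
    refine ⟨?_, ?_, ?_, h6⟩
    · intro i
      match i with
      | 0 => exact h0
      | 1 => exact h1
      | 2 => exact h2
      | (n+3) => rw [h6 (n+3) (by omega)]
    · intro i hi
      interval_cases i <;> simp [pSum, Finset.sum_range_succ] <;> linarith
    · simp [pSum, Finset.sum_range_succ]; linarith

lemma exists_path (m : ℕ) (d : ℕ) (a : ℤ) (hm : 1 ≤ m)
    (h1 : (d : ℤ) ≤ a) (h2 : a ≤ 3 * (m : ℤ) - 2 * d) :
    ∃ x0 x1 : ℤ, 0 ≤ x0 ∧ x0 ≤ (m : ℤ) ∧ 0 ≤ x1 ∧ x0 + x1 ≤ 2 * (m : ℤ) ∧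
      min x1 (max 0 (x1 - (m : ℤ) - 1)) + min x0 (max 0 ((m : ℤ) - x1)) = (d : ℤ) ∧
      3 * (m : ℤ) - 2 * x0 - x1 = a := by
  by_cases hc : 2 * (m : ℤ) - d ≤ a
  · exact ⟨(d : ℤ), 3 * (m : ℤ) - 2 * d - a, by omega, by omega, by omega, by omega, by omega,
      by omega⟩
  · rcases Int.even_or_odd (a - d) with ⟨k, hk⟩ | ⟨k, hk⟩
    · exact ⟨(m : ℤ) - k, (m : ℤ) - d, by omega, by omega, by omega, by omega, by omega, by omega⟩
    · exact ⟨(m : ℤ) - 1 - d - k, (m : ℤ) + 1 + d, by omega, by omega, by omega, by omega,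
        by omega, by omega⟩

/-- Claim `stringsym`: `area` restricts to a bijection from `𝐃^d_{2,m}` onto
`{a : ℤ | d ≤ a ≤ 3m − 2d}`. -/
theorem statement18 (m : ℕ) (hm : 1 ≤ m) (d : ℕ) :
    Set.BijOn (area 2 m) {x : ℕ → ℤ | IsDyck 2 m x ∧ degr 2 m x = (d : ℤ)}
      {a : ℤ | (d : ℤ) ≤ a ∧ a ≤ 3 * (m : ℤ) - 2 * (d : ℤ)} := by
  refine ⟨?_, ?_, ?_⟩
  · rintro x ⟨hx, hdeg⟩
    rw [isDyck_two] at hx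
    rw [degr_two] at hdeg
    rw [Set.mem_setOf_eq, area_two]
    obtain ⟨h0, h1, h2, h3, h4, h5, h6⟩ := hx
    constructor <;> omega
  · rintro x ⟨hx, hdx⟩ y ⟨hy, hdy⟩ hxy
    rw [isDyck_two] at hx hy
    rw [degr_two] at hdx hdy
    rw [area_two, area_two] at hxy
    obtain ⟨hx0, hx1, hx2, hx3, hx4, hx5, hx6⟩ := hx
    obtain ⟨hy0, hy1, hy2, hy3, hy4, hy5, hy6⟩ := hy
    funext i
    match i with
    | 0 => omega
    | 1 => omega
    | 2 => omega
    | (n+3) => rw [hx6 (n+3) (by omega), hy6 (n+3) (by omega)]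
  · rintro a ⟨ha1, ha2⟩
    obtain ⟨x0, x1, h0, h1, h2, h3, h4, h5⟩ := exists_path m d a hm ha1 ha2
    refine ⟨fun i => match i with
      | 0 => x0 | 1 => x1 | 2 => 3 * (m : ℤ) - x0 - x1 | _ => 0, ?_, ?_⟩
    · refine ⟨?_, ?_⟩
      · rw [isDyck_two]
        refine ⟨h0, h2, show (0:ℤ) ≤ 3 * (m : ℤ) - x0 - x1 by omega, h1, h3,
          show x0 + x1 + (3 * (m : ℤ) - x0 - x1) = 3 * (m : ℤ) by ring, ?_⟩
        intro i hi
        match i with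
        | (n+3) => rfl
      · rw [degr_two]
        show min x1 (max 0 (x1 - (m : ℤ) - 1)) + min x0 (max 0 ((m : ℤ) - x1)) = (d : ℤ)
        exact h4
    · rw [area_two]
      show 3 * (m : ℤ) - 2 * x0 - x1 = a
      exact h5
end
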